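/- arXiv:1303.5171 — 5 statements merged into one kernel-verified Lean document; each statement's English description precedes it below -/
import Mathlib

section
/- For any connected graph G with at least 3 vertices, κ₃(G) ≤ κ(G), where κ(G) is the vertex connectivity of G. -/
open Filter Asymptotics
open scoped Classical

noncomputable section

/-- The number of edges of a simple graph on a finite vertex type. -/
def edgeCount {V : Type*} [Fintype V] (G : SimpleGraph V) : ℕ :=
  G.edgeFinset.card

/-- Probability in the Erdős–Rényi model `G(n,p)` of a set `A` of graphs on `Fin n`:
each of the `n.choose 2` possible edges is present independently with probability `p`. -/
def gnpProb (n : ℕ) (p : ℝ) (A : Set (SimpleGraph (Fin n))) : ℝ :=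
  ∑ G ∈ Finset.univ.filter (fun G => G ∈ A),
    p ^ edgeCount G * (1 - p) ^ (n.choose 2 - edgeCount G)

/-- Probability in the uniform model `G(n,M)` of a set `A` of graphs on `Fin n`:
all graphs with exactly `M` edges are equally likely. -/
def gnmProb (n M : ℕ) (A : Set (SimpleGraph (Fin n))) : ℝ :=
  ((Finset.univ.filter (fun G : SimpleGraph (Fin n) => edgeCount G = M ∧ G ∈ A)).card : ℝ) /
    ((Finset.univ.filter (fun G : SimpleGraph (Fin n) => edgeCount G = M)).card : ℝ)

/-- `κ(S)`: the largest number of internally disjoint trees connecting `S`, i.e. trees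
`T₁, …, T_k` of `G` with `S ⊆ V(Tᵢ)`, `V(Tᵢ) ∩ V(Tⱼ) = S` and `E(Tᵢ) ∩ E(Tⱼ) = ∅`
for `i ≠ j`. -/
def kappaSet {V : Type*} (G : SimpleGraph V) (S : Set V) : ℕ :=
  sSup {k | ∃ T : Fin k → G.Subgraph,
    (∀ i, S ⊆ (T i).verts ∧ ((T i).coe).IsTree) ∧
    (∀ i j, i ≠ j → (T i).verts ∩ (T j).verts = S ∧
      (T i).edgeSet ∩ (T j).edgeSet = ∅)}

/-- `λ(S)`: the largest number of pairwise edge-disjoint trees of `G` each containing `S`. -/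
def lambdaSet {V : Type*} (G : SimpleGraph V) (S : Set V) : ℕ :=
  sSup {k | ∃ T : Fin k → G.Subgraph,
    (∀ i, S ⊆ (T i).verts ∧ ((T i).coe).IsTree) ∧
    (∀ i j, i ≠ j → (T i).edgeSet ∩ (T j).edgeSet = ∅)}

/-- The generalized `r`-connectivity `κ_r(G)`: the minimum of `κ(S)` over `r`-subsets `S`,
and `0` if `G` is disconnected. -/
def genKappa {V : Type*} [Fintype V] (r : ℕ) (G : SimpleGraph V) : ℕ :=
  if G.Connected then
    sInf {k | ∃ S : Finset V, S.card = r ∧ kappaSet G ↑S = k}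
  else 0

/-- The generalized `r`-edge-connectivity `λ_r(G)`: the minimum of `λ(S)` over
`r`-subsets `S`, and `0` if `G` is disconnected. -/
def genLambda {V : Type*} [Fintype V] (r : ℕ) (G : SimpleGraph V) : ℕ :=
  if G.Connected then
    sInf {k | ∃ S : Finset V, S.card = r ∧ lambdaSet G ↑S = k}
  else 0

/-- The vertex connectivity `κ(G)`: the largest `k` such that `G` is `k`-connected,
i.e. `k < |V|` and the removal of fewer than `k` vertices leaves a connected graph. -/
def vertexConnectivity {V : Type*} [Fintype V] (G : SimpleGraph V) : ℕ :=
  sSup {k | k < Fintype.card V ∧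
    ∀ S : Finset V, S.card < k → (G.induce ((↑S : Set V)ᶜ)).Connected}

/-- The edge connectivity `λ(G)`: the largest `k` such that removing fewer than `k`
edges always leaves a connected graph. -/
def edgeConnectivity {V : Type*} [Fintype V] (G : SimpleGraph V) : ℕ :=
  sSup {k | ∀ F : Finset (Sym2 V), F.card < k → (G.deleteEdges ↑F).Connected}

/-- The minimum degree `δ(G)`. -/
def minDeg {V : Type*} [Fintype V] (G : SimpleGraph V) : ℕ :=
  G.minDegree

/-- The number of children of `v` in the graph `H` viewed as rooted at `r`:
neighbours of `v` lying one step further from the root. -/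
def childCount {W : Type*} (H : SimpleGraph W) (r v : W) : ℕ :=
  {w | H.Adj v w ∧ H.dist r w = H.dist r v + 1}.ncard

/-- The depth of the graph `H` viewed as rooted at `r`: the largest distance from `r`. -/
def rootedDepth {W : Type*} (H : SimpleGraph W) (r : W) : ℕ :=
  sSup (Set.range (H.dist r))

/-- `T` is a subtree of `G` rooted at `r`, of depth `d`, in which every non-leaf
vertex has exactly `t` children (a `t`-ary tree of depth `d`). -/
def IsAryTreeOfDepth {V : Type*} {G : SimpleGraph V} (T : G.Subgraph) (r : V)
    (t d : ℕ) : Prop :=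
  ∃ hr : r ∈ T.verts,
    T.coe.IsTree ∧ rootedDepth T.coe ⟨r, hr⟩ = d ∧
      ∀ v : T.verts, childCount T.coe ⟨r, hr⟩ v = 0 ∨ childCount T.coe ⟨r, hr⟩ v = t

end

section Aux

open SimpleGraph

variable {V : Type*}

/-- A walk in `G` whose support lies in `s` yields reachability in `G.induce s`. -/
lemma reachable_induce_of_walk {G : SimpleGraph V} {s : Set V}
    {a b : V} (p : G.Walk a b) :
    (∀ w ∈ p.support, w ∈ s) → ∀ (ha : a ∈ s) (hb : b ∈ s),
      (G.induce s).Reachable ⟨a, ha⟩ ⟨b, hb⟩ := by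
  induction p with
  | nil => intro _ ha hb; exact Reachable.refl _
  | @cons u c w h q ih =>
      intro hp ha hb
      have hc : c ∈ s := hp c (by simp)
      have hadj : (G.induce s).Adj ⟨u, ha⟩ ⟨c, hc⟩ := by
        simpa [SimpleGraph.comap_adj] using h
      exact hadj.reachable.trans (ih (fun w hw => hp w (by simp [hw])) hc hb)

/-- A connected subgraph containing two distinct vertices has an edge at each of them. -/
lemma exists_subgraph_adj {G : SimpleGraph V} {T : G.Subgraph} {x y : V}
    (hx : x ∈ T.verts) (hy : y ∈ T.verts) (hc : T.coe.Connected) (hxy : x ≠ y) :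
    ∃ v, T.Adj x v := by
  obtain ⟨p⟩ := hc ⟨x, hx⟩ ⟨y, hy⟩
  have hnn : ¬ p.Nil := Walk.not_nil_of_ne (by simpa [Subtype.ext_iff] using hxy)
  have := Walk.adj_snd hnn
  exact ⟨(p.getVert 1).1, by simpa using this⟩

lemma zero_mem_kappa_aux {G : SimpleGraph V} (S : Set V) :
    (0 : ℕ) ∈ {k | ∃ T : Fin k → G.Subgraph,
      (∀ i, S ⊆ (T i).verts ∧ ((T i).coe).IsTree) ∧
      (∀ i j, i ≠ j → (T i).verts ∩ (T j).verts = S ∧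
        (T i).edgeSet ∩ (T j).edgeSet = ∅)} :=
  ⟨Fin.elim0, fun i => i.elim0, fun i => i.elim0⟩

/-- If every `G`-neighbour of some `x ∈ S` lies in `W`, then `κ(S) ≤ |W|`. -/
lemma kappaSet_le_of_nbhd_subset {G : SimpleGraph V} {S : Set V} {x y : V}
    (hx : x ∈ S) (hy : y ∈ S) (hxy : x ≠ y)
    (W : Finset V) (hW : ∀ v, G.Adj x v → v ∈ W) :
    kappaSet G S ≤ W.card := by
  refine csSup_le ⟨0, zero_mem_kappa_aux S⟩ ?_
  rintro k ⟨T, hT, hdisj⟩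
  have key : ∀ i : Fin k, ∃ v, (T i).Adj x v := fun i =>
    exists_subgraph_adj ((hT i).1 hx) ((hT i).1 hy) (hT i).2.isConnected hxy
  choose v hv using key
  have finj : Function.Injective (fun i : Fin k => (⟨v i, hW _ ((T i).adj_sub (hv i))⟩ : ↥W)) := by
    intro i j hij
    by_contra hne
    have h1 : s(x, v i) ∈ (T i).edgeSet := SimpleGraph.Subgraph.mem_edgeSet.2 (hv i)
    have h2 : s(x, v i) ∈ (T j).edgeSet := by
      have : v i = v j := by simpa [Subtype.ext_iff] using hij
      exact SimpleGraph.Subgraph.mem_edgeSet.2 (this ▸ hv j)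
    have := (hdisj i j hne).2
    exact absurd (Set.mem_inter h1 h2) (by simp [this])
  calc k = Fintype.card (Fin k) := (Fintype.card_fin k).symm
    _ ≤ Fintype.card ↥W := Fintype.card_le_of_injective _ finj
    _ = W.card := Fintype.card_coe W

/-- If `x, y ∈ S` are separated by the cut `W` disjoint from `S`, then `κ(S) ≤ |W|`. -/
lemma kappaSet_le_card_cut {G : SimpleGraph V} {S : Set V} {x y : V}
    (W : Finset V) (hx : x ∈ S) (hy : y ∈ S)
    (hxW : x ∈ ((↑W : Set V)ᶜ)) (hyW : y ∈ ((↑W : Set V)ᶜ))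
    (hSW : ∀ w ∈ W, w ∉ S)
    (hnr : ¬ (G.induce ((↑W : Set V)ᶜ)).Reachable ⟨x, hxW⟩ ⟨y, hyW⟩) :
    kappaSet G S ≤ W.card := by
  refine csSup_le ⟨0, zero_mem_kappa_aux S⟩ ?_
  rintro k ⟨T, hT, hdisj⟩
  have key : ∀ i : Fin k, ∃ w, w ∈ W ∧ w ∈ (T i).verts ∧ w ∉ S := by
    intro i
    obtain ⟨p⟩ := (hT i).2.isConnected ⟨x, (hT i).1 hx⟩ ⟨y, (hT i).1 hy⟩
    set q : G.Walk x y := p.map (T i).hom with hq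
    by_cases hall : ∀ w ∈ q.support, w ∈ ((↑W : Set V)ᶜ)
    · exact absurd (reachable_induce_of_walk q hall hxW hyW) hnr
    · push_neg at hall
      obtain ⟨w, hws, hwW⟩ := hall
      have hwW' : w ∈ W := by simpa using hwW
      have hwV : w ∈ (T i).verts := by
        obtain ⟨u, _, rfl⟩ := List.mem_map.1 (cast (congrArg (w ∈ ·) (Walk.support_map (T i).hom p)) hws)
        exact u.2
      exact ⟨w, hwW', hwV, hSW w hwW'⟩
  choose w hwW hwV hwS using key
  have finj : Function.Injective (fun i : Fin k => (⟨w i, hwW i⟩ : ↥W)) := by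
    intro i j hij
    by_contra hne
    have hww : w i = w j := by simpa [Subtype.ext_iff] using hij
    have : w i ∈ (T i).verts ∩ (T j).verts := ⟨hwV i, hww ▸ hwV j⟩
    rw [(hdisj i j hne).1] at this
    exact hwS i this
  calc k = Fintype.card (Fin k) := (Fintype.card_fin k).symm
    _ ≤ Fintype.card ↥W := Fintype.card_le_of_injective _ finj
    _ = W.card := Fintype.card_coe W

end Aux

/-- For any connected graph `G` on at least 3 vertices, `κ₃(G) ≤ κ(G)`. -/
theorem genKappa_three_le_vertexConnectivity {V : Type*} [Fintype V] (G : SimpleGraph V)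
    (hG : G.Connected) (hV : 3 ≤ Fintype.card V) :
    genKappa 3 G ≤ vertexConnectivity G := by
  classical
  unfold genKappa
  rw [if_pos hG]
  set A : Set ℕ := {k | k < Fintype.card V ∧
    ∀ S : Finset V, S.card < k → (G.induce ((↑S : Set V)ᶜ)).Connected} with hA
  have hAeq : vertexConnectivity G = sSup A := rfl
  have hA0 : (0:ℕ) ∈ A := ⟨by omega, fun S hS => absurd hS (by omega)⟩
  have hAbdd : BddAbove A := ⟨Fintype.card V, fun k hk => le_of_lt hk.1⟩
  have hcA : vertexConnectivity G ∈ A := by rw [hAeq]; exact Nat.sSup_mem ⟨0, hA0⟩ hAbdd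
  have hclt : vertexConnectivity G < Fintype.card V := hcA.1
  have hsucc : vertexConnectivity G + 1 ∉ A := by
    intro h
    have := le_csSup hAbdd h
    rw [← hAeq] at this
    omega
  by_cases hbig : Fintype.card V ≤ vertexConnectivity G + 1
  · -- `c = |V| - 1`; bound `κ(S)` by a vertex degree for an arbitrary `S`.
    obtain ⟨S, _, hS3⟩ := Finset.exists_subset_card_eq (s := Finset.univ) (n := 3)
      (by simpa [Finset.card_univ] using hV)
    obtain ⟨x, hx, y, hy, hxy⟩ := (Finset.one_lt_card (s := S)).1 (by omega)
    have hb := kappaSet_le_of_nbhd_subset (G := G) (S := (↑S : Set V))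
      (Finset.mem_coe.2 hx) (Finset.mem_coe.2 hy) hxy (Finset.univ.erase x)
      (fun v hv => Finset.mem_erase.2 ⟨hv.ne', Finset.mem_univ v⟩)
    have hcard : (Finset.univ.erase x).card = Fintype.card V - 1 := by
      rw [Finset.card_erase_of_mem (Finset.mem_univ x), Finset.card_univ]
    refine le_trans (Nat.sInf_le ⟨S, hS3, rfl⟩) ?_
    omega
  · push_neg at hbig
    have hex : ¬ ∀ S : Finset V, S.card < vertexConnectivity G + 1 → (G.induce ((↑S : Set V)ᶜ)).Connected :=
      fun h => hsucc ⟨by omega, h⟩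
    push_neg at hex
    obtain ⟨W, hWc, hWnc⟩ := hex
    have hWle : W.card ≤ vertexConnectivity G := by omega
    have hne : Nonempty ↥((↑W : Set V)ᶜ) := by
      by_contra h
      have : ∀ v : V, v ∈ W := by
        intro v
        by_contra hv
        exact h ⟨⟨v, by simpa using hv⟩⟩
      have : W = Finset.univ := Finset.eq_univ_iff_forall.2 this
      rw [this, Finset.card_univ] at hWc
      omega
    have hnp : ¬ (G.induce ((↑W : Set V)ᶜ)).Preconnected := fun h =>
      hWnc ((SimpleGraph.connected_iff _).2 ⟨h, hne⟩)
    unfold SimpleGraph.Preconnected at hnp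
    push_neg at hnp
    obtain ⟨a, b, hab⟩ := hnp
    have habne : (a : V) ≠ (b : V) := by
      intro h
      exact hab (Subtype.ext h ▸ SimpleGraph.Reachable.refl a)
    by_cases hz : ∃ z, z ∉ W ∧ z ≠ (a : V) ∧ z ≠ (b : V)
    · -- internal cut vertices
      obtain ⟨z, hzW, hza, hzb⟩ := hz
      set S : Finset V := {(a : V), (b : V), z} with hS
      have hScard : S.card = 3 :=
        Finset.card_eq_three.2 ⟨_, _, _, habne, Ne.symm hza, Ne.symm hzb, rfl⟩
      have haS : (a : V) ∈ (↑S : Set V) := by simp [hS]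
      have hbS : (b : V) ∈ (↑S : Set V) := by simp [hS]
      have hSW : ∀ w ∈ W, w ∉ (↑S : Set V) := by
        intro w hw hwS
        simp only [hS, Finset.coe_insert, Set.mem_insert_iff, Finset.coe_singleton,
          Set.mem_singleton_iff] at hwS
        rcases hwS with rfl | rfl | rfl
        · exact a.2 (Finset.mem_coe.2 hw)
        · exact b.2 (Finset.mem_coe.2 hw)
        · exact hzW hw
      have hb2 := kappaSet_le_card_cut (G := G) (S := (↑S : Set V)) W haS hbS a.2 b.2 hSW
        (by exact hab)
      exact le_trans (Nat.sInf_le ⟨S, hScard, rfl⟩) (le_trans hb2 hWle)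
    · push_neg at hz
      have haW : (a : V) ∉ W := fun h => a.2 (Finset.mem_coe.2 h)
      have hbW : (b : V) ∉ W := fun h => b.2 (Finset.mem_coe.2 h)
      have hWne : W.Nonempty := by
        rcases Finset.eq_empty_or_nonempty W with h | h
        · exfalso
          have hsub : (Finset.univ : Finset V) ⊆ {(a : V), (b : V)} := by
            intro v _
            by_cases hvW : v ∈ W
            · simp [h] at hvW
            · by_cases hva : v = (a : V)
              · simp [hva]
              · simp [hz v hvW hva]
          have h1 := Finset.card_le_card hsub
          have h2 : ({(a : V), (b : V)} : Finset V).card ≤ 2 :=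
            le_trans (Finset.card_insert_le _ _) (by simp)
          rw [Finset.card_univ] at h1
          omega
        · exact h
      obtain ⟨z, hzW⟩ := hWne
      have hza : z ≠ (a : V) := fun h => haW (h ▸ hzW)
      have hzb : z ≠ (b : V) := fun h => hbW (h ▸ hzW)
      set S : Finset V := {(a : V), (b : V), z} with hS
      have hScard : S.card = 3 :=
        Finset.card_eq_three.2 ⟨_, _, _, habne, Ne.symm hza, Ne.symm hzb, rfl⟩
      have haS : (a : V) ∈ (↑S : Set V) := by simp [hS]
      have hbS : (b : V) ∈ (↑S : Set V) := by simp [hS]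
      have hnadj : ¬ G.Adj (a : V) (b : V) := by
        intro h
        have : (G.induce ((↑W : Set V)ᶜ)).Adj a b := by
          simpa [SimpleGraph.comap_adj] using h
        exact hab this.reachable
      have hnbr : ∀ v, G.Adj (a : V) v → v ∈ W := by
        intro v hv
        by_contra hvW
        by_cases hva : v = (a : V)
        · exact G.irrefl (hva ▸ hv)
        · exact hnadj ((hz v hvW hva) ▸ hv)
      have hb2 := kappaSet_le_of_nbhd_subset (G := G) (S := (↑S : Set V)) haS hbS habne W hnbr
      exact le_trans (Nat.sInf_le ⟨S, hScard, rfl⟩) (le_trans hb2 hWle)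
end

section
/- For any connected graph G with at least 3 vertices, κ₃(G) ≤ λ₃(G) ≤ δ(G), where δ(G) is the minimum degree of G. -/
open Filter Asymptotics
open scoped Classical

/-- Any family of edge-disjoint trees each containing two fixed distinct vertices
has size at most the degree of either vertex. -/
lemma lambda_mem_le_degree {V : Type*} [Fintype V] (G : SimpleGraph V) (S : Set V)
    (v w : V) (hv : v ∈ S) (hw : w ∈ S) (hvw : v ≠ w) (k : ℕ)
    (hk : ∃ T : Fin k → G.Subgraph,
      (∀ i, S ⊆ (T i).verts ∧ ((T i).coe).IsTree) ∧
      (∀ i j, i ≠ j → (T i).edgeSet ∩ (T j).edgeSet = ∅)) :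
    k ≤ G.degree v := by
  classical
  obtain ⟨T, hT, hdisj⟩ := hk
  have hadj : ∀ i : Fin k, ∃ u, (T i).Adj v u := by
    intro i
    obtain ⟨hsub, htree⟩ := hT i
    have hv' : v ∈ (T i).verts := hsub hv
    have hw' : w ∈ (T i).verts := hsub hw
    obtain ⟨p⟩ : ((T i).coe).Reachable ⟨v, hv'⟩ ⟨w, hw'⟩ :=
      htree.isConnected.preconnected _ _
    have hne : (⟨v, hv'⟩ : (T i).verts) ≠ ⟨w, hw'⟩ := by
      simpa [Subtype.ext_iff] using hvw
    have ha := p.adj_snd (SimpleGraph.Walk.not_nil_of_ne hne)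
    exact ⟨((p.getVert 1 : (T i).verts) : V), by simpa using ha⟩
  choose f hf using hadj
  have hcard : (Finset.univ : Finset (Fin k)).card ≤ (G.neighborFinset v).card := by
    apply Finset.card_le_card_of_injOn f
    · intro i _
      rw [Finset.mem_coe, SimpleGraph.mem_neighborFinset]
      exact (T i).adj_sub (hf i)
    · intro i _ j _ hij
      by_contra hne
      have h1 : s(v, f i) ∈ (T i).edgeSet :=
        SimpleGraph.Subgraph.mem_edgeSet.mpr (hf i)
      have h2 : s(v, f i) ∈ (T j).edgeSet := by
        rw [hij]
        exact SimpleGraph.Subgraph.mem_edgeSet.mpr (hf j)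
      have hd := hdisj i j hne
      exact absurd (Set.mem_inter h1 h2) (by simp [hd])
  rwa [Finset.card_univ, Fintype.card_fin,
    SimpleGraph.card_neighborFinset_eq_degree] at hcard

lemma lambdaSet_nonempty_zero {V : Type*} (G : SimpleGraph V) (S : Set V) :
    ∃ T : Fin 0 → G.Subgraph,
      (∀ i, S ⊆ (T i).verts ∧ ((T i).coe).IsTree) ∧
      (∀ i j, i ≠ j → (T i).edgeSet ∩ (T j).edgeSet = ∅) :=
  ⟨Fin.elim0, fun i => i.elim0, fun i => i.elim0⟩

lemma lambdaSet_le_degree {V : Type*} [Fintype V] (G : SimpleGraph V) (S : Set V)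
    (v w : V) (hv : v ∈ S) (hw : w ∈ S) (hvw : v ≠ w) :
    lambdaSet G S ≤ G.degree v := by
  rw [lambdaSet]
  refine csSup_le ⟨0, ?_⟩ (fun k hk => lambda_mem_le_degree G S v w hv hw hvw k hk)
  exact lambdaSet_nonempty_zero G S

lemma kappaSet_le_lambdaSet {V : Type*} [Fintype V] (G : SimpleGraph V) (S : Set V)
    (v w : V) (hv : v ∈ S) (hw : w ∈ S) (hvw : v ≠ w) :
    kappaSet G S ≤ lambdaSet G S := by
  rw [kappaSet, lambdaSet]
  apply csSup_le_csSup
  · exact ⟨G.degree v, fun k hk => lambda_mem_le_degree G S v w hv hw hvw k hk⟩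
  · refine ⟨0, Fin.elim0, fun i => i.elim0, fun i => i.elim0⟩
  · rintro k ⟨T, hT, hdisj⟩
    exact ⟨T, hT, fun i j hij => (hdisj i j hij).2⟩

lemma card_three_two_elems {V : Type*} (S : Finset V) (hS : S.card = 3) :
    ∃ v ∈ S, ∃ w ∈ S, v ≠ w := by
  have h : 1 < S.card := by omega
  obtain ⟨v, hv, w, hw, hvw⟩ := Finset.one_lt_card.mp h
  exact ⟨v, hv, w, hw, hvw⟩

/-- For any connected graph `G` on at least 3 vertices, `κ₃(G) ≤ λ₃(G) ≤ δ(G)`. -/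
theorem genKappa_le_genLambda_le_minDeg {V : Type*} [Fintype V] (G : SimpleGraph V)
    (hG : G.Connected) (hV : 3 ≤ Fintype.card V) :
    genKappa 3 G ≤ genLambda 3 G ∧ genLambda 3 G ≤ minDeg G := by
  classical
  have hne : Nonempty V := Fintype.card_pos_iff.mp (by omega)
  -- a vertex of minimum degree
  obtain ⟨v, hvdeg⟩ := G.exists_minimal_degree_vertex
  -- a 3-set containing v
  have herase : 2 ≤ (Finset.univ.erase v).card := by
    rw [Finset.card_erase_of_mem (Finset.mem_univ v), Finset.card_univ]
    omega
  obtain ⟨t, ht_sub, ht_card⟩ := Finset.exists_subset_card_eq herase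
  have hvt : v ∉ t := fun h => (Finset.mem_erase.mp (ht_sub h)).1 rfl
  set S0 : Finset V := insert v t with hS0
  have hS0card : S0.card = 3 := by
    rw [hS0, Finset.card_insert_of_notMem hvt, ht_card]
  obtain ⟨w, hwt⟩ : t.Nonempty := Finset.card_pos.mp (by omega)
  have hwv : v ≠ w := fun h => hvt (h ▸ hwt)
  have hvS0 : v ∈ (↑S0 : Set V) := by simp [hS0]
  have hwS0 : w ∈ (↑S0 : Set V) := by simp [hS0, hwt]
  -- the sets of values are nonempty
  have hLne : {k | ∃ S : Finset V, S.card = 3 ∧ lambdaSet G ↑S = k}.Nonempty :=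
    ⟨lambdaSet G ↑S0, S0, hS0card, rfl⟩
  constructor
  · -- κ₃ ≤ λ₃
    rw [genKappa, genLambda, if_pos hG, if_pos hG]
    obtain ⟨S1, hS1card, hS1⟩ := Nat.sInf_mem hLne
    obtain ⟨a, haS, b, hbS, hab⟩ := card_three_two_elems S1 hS1card
    calc sInf {k | ∃ S : Finset V, S.card = 3 ∧ kappaSet G ↑S = k}
        ≤ kappaSet G ↑S1 := Nat.sInf_le ⟨S1, hS1card, rfl⟩
      _ ≤ lambdaSet G ↑S1 := kappaSet_le_lambdaSet G _ a b haS hbS hab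
      _ = _ := hS1
  · -- λ₃ ≤ δ
    rw [genLambda, if_pos hG, minDeg]
    calc sInf {k | ∃ S : Finset V, S.card = 3 ∧ lambdaSet G ↑S = k}
        ≤ lambdaSet G ↑S0 := Nat.sInf_le ⟨S0, hS0card, rfl⟩
      _ ≤ G.degree v := lambdaSet_le_degree G ↑S0 v w hvS0 hwS0 hwv
      _ = G.minDegree := hvdeg.symm
end

section
/- Let G be a connected graph of order n. Then for every integer r with 3 ≤ r ≤ n, λ_r(G) ≤ λ(G), where λ(G) is the edge connectivity of G. -/
open Filter Asymptotics
open scoped Classical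

/-- For a connected graph `G` of order `n` and any `3 ≤ r ≤ n`, `λ_r(G) ≤ λ(G)`. -/
theorem genLambda_le_edgeConnectivity {V : Type*} [Fintype V] (G : SimpleGraph V)
    (hG : G.Connected) (r : ℕ) (hr : 3 ≤ r) (hrn : r ≤ Fintype.card V) :
    genLambda r G ≤ edgeConnectivity G := by
    classical
  have hV2 : 2 ≤ Fintype.card V := by omega
  have hnt : Nontrivial V := Fintype.one_lt_card_iff_nontrivial.mp (by omega)
  set A : Set ℕ :=
    {k | ∀ F : Finset (Sym2 V), F.card < k → (G.deleteEdges ↑F).Connected} with hA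
  have hbdd : BddAbove A := by
    refine ⟨G.edgeFinset.card, fun k hk => ?_⟩
    by_contra h
    push_neg at h
    have hconn := hk G.edgeFinset h
    have hbot : G.deleteEdges ↑G.edgeFinset = ⊥ := by
      ext v w
      simp [SimpleGraph.deleteEdges_adj, SimpleGraph.mem_edgeSet]
    rw [hbot] at hconn
    exact SimpleGraph.not_preconnected_bot hconn.preconnected
  have h0A : 0 ∈ A := fun F hF => absurd hF (by omega)
  have heq : edgeConnectivity G = sSup A := by rw [edgeConnectivity, hA]
  have hnotmem : edgeConnectivity G + 1 ∉ A := fun hmem => by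
    have := le_csSup hbdd hmem
    omega
  simp only [hA, Set.mem_setOf_eq, not_forall] at hnotmem
  obtain ⟨F, hFcard, hFdisc⟩ := hnotmem
  have hFle : F.card ≤ edgeConnectivity G := by omega
  -- get two vertices not reachable in deleteEdges F
  have : ¬ (G.deleteEdges ↑F).Preconnected := fun hp =>
    hFdisc (SimpleGraph.Connected.mk hp)
  simp only [SimpleGraph.Preconnected, not_forall] at this
  obtain ⟨a, b, hab⟩ := this
  have habne : a ≠ b := fun h => hab (h ▸ SimpleGraph.Reachable.refl a)
  -- build S
  obtain ⟨S, hSsub, hScard⟩ := Finset.exists_superset_card_eq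
    (s := {a, b}) (n := r) (by
      have := Finset.card_insert_le a ({b} : Finset V)
      simp at this ⊢
      omega) hrn
  have haS : a ∈ S := hSsub (by simp)
  have hbS : b ∈ S := hSsub (by simp)
  -- lambdaSet bound
  have hlam : lambdaSet G ↑S ≤ F.card := by
    have h0 : (0:ℕ) ∈ {k | ∃ T : Fin k → G.Subgraph,
        (∀ i, ↑S ⊆ (T i).verts ∧ ((T i).coe).IsTree) ∧
        (∀ i j, i ≠ j → (T i).edgeSet ∩ (T j).edgeSet = ∅)} :=
      ⟨Fin.elim0, fun i => i.elim0, fun i _ _ => i.elim0⟩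
    apply csSup_le ⟨0, h0⟩
    rintro k ⟨T, hT, hdisj⟩
    -- each tree uses an edge of F
    have hex : ∀ i : Fin k, ∃ e, e ∈ F ∧ e ∈ (T i).edgeSet := by
      intro i
      by_contra h
      push_neg at h
      have hadj : ∀ {x y : (T i).verts}, (T i).coe.Adj x y →
          (G.deleteEdges ↑F).Adj x.val y.val := by
        intro x y hxy
        rw [SimpleGraph.deleteEdges_adj]
        refine ⟨(T i).adj_sub hxy, fun hmem => ?_⟩
        exact h _ hmem (SimpleGraph.Subgraph.mem_edgeSet.mpr hxy)
      have haT : a ∈ (T i).verts := (hT i).1 haS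
      have hbT : b ∈ (T i).verts := (hT i).1 hbS
      have hreach : ((T i).coe).Reachable ⟨a, haT⟩ ⟨b, hbT⟩ :=
        (hT i).2.isConnected.preconnected _ _
      have h2 : (G.deleteEdges ↑F).Reachable a b :=
        hreach.map ⟨Subtype.val, fun {x y} hxy => hadj hxy⟩
      exact hab h2
    choose e heF heT using hex
    have : (Finset.univ : Finset (Fin k)).card ≤ F.card := by
      apply Finset.card_le_card_of_injOn e (fun i _ => heF i)
      intro i _ j _ hij
      by_contra hne
      have := hdisj i j hne
      have : e i ∈ (T i).edgeSet ∩ (T j).edgeSet := ⟨heT i, hij ▸ heT j⟩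
      rw [hdisj i j hne] at this
      exact this
    simpa using this
  have hgen : genLambda r G ≤ lambdaSet G ↑S := by
    rw [genLambda, if_pos hG]
    exact Nat.sInf_le ⟨S, hScard, rfl⟩
  omega
end

section
/- Let k ≥ 1 be a fixed integer, p(n) = (log n + (k+1)·log log n − log log log n)/n and D = log n / log log n. With probability 1 − o(n^{−3}), the following holds in G(n, p(n)): for every collection 𝒫 of at most k pairwise vertex-disjoint subtrees (in particular paths) of G, each containing at most (5/2)·D edges, and every vertex v not lying in any member of 𝒫, the vertex v has at most 12k + 1 neighbors among the vertices of the members of 𝒫. -/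
open Filter Asymptotics
open scoped Classical

noncomputable section
open Finset

namespace ErProof

abbrev Slot (n : ℕ) := {e : Sym2 (Fin n) // ¬ e.IsDiag}

variable {n : ℕ} {p : ℝ}

lemma card_slot (n : ℕ) : Fintype.card (Slot n) = n.choose 2 := by
  simpa using Sym2.card_subtype_not_diag (α := Fin n)

/-- weight of a graph as a product over slots -/
lemma weight_eq_prod (G : SimpleGraph (Fin n)) :
    p ^ edgeCount G * (1 - p) ^ (n.choose 2 - edgeCount G)
      = ∏ e : Slot n, (if (e : Sym2 (Fin n)) ∈ G.edgeSet then p else 1 - p) := by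
  classical
  rw [Finset.prod_ite]
  have hcard : (Finset.univ.filter (fun e : Slot n => (e : Sym2 (Fin n)) ∈ G.edgeSet)).card
      = edgeCount G := by
    show _ = G.edgeFinset.card
    apply Finset.card_bij (fun (e : Slot n) _ => (e : Sym2 (Fin n)))
    · intro e he
      simp only [Finset.mem_filter] at he
      simpa [SimpleGraph.mem_edgeFinset] using he.2
    · intro a ha b hb hab
      exact Subtype.ext hab
    · intro e he
      rw [SimpleGraph.mem_edgeFinset] at he
      exact ⟨⟨e, G.not_isDiag_of_mem_edgeSet he⟩, by simpa using he, rfl⟩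
  have hcard2 : (Finset.univ.filter (fun e : Slot n => ¬ (e : Sym2 (Fin n)) ∈ G.edgeSet)).card
      = n.choose 2 - edgeCount G := by
    have := Finset.card_filter_add_card_filter_not
      (s := (Finset.univ : Finset (Slot n)))
      (p := fun e : Slot n => (e : Sym2 (Fin n)) ∈ G.edgeSet)
    rw [Finset.card_univ, card_slot] at this
    omega
  rw [Finset.prod_const, Finset.prod_const, hcard, hcard2]

end ErProof

namespace ErProof2
open ErProof

def wgt (n : ℕ) (p : ℝ) (G : SimpleGraph (Fin n)) : ℝ :=
  p ^ edgeCount G * (1 - p) ^ (n.choose 2 - edgeCount G)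

lemma gnpProb_eq_wgt (n : ℕ) (p : ℝ) (A : Set (SimpleGraph (Fin n))) :
    gnpProb n p A = ∑ G ∈ Finset.univ.filter (fun G => G ∈ A), wgt n p G := rfl

lemma wgt_nonneg {n : ℕ} {p : ℝ} (hp0 : 0 ≤ p) (hp1 : p ≤ 1) (G : SimpleGraph (Fin n)) :
    0 ≤ wgt n p G := by
  have h1 : (0:ℝ) ≤ 1 - p := by linarith
  unfold wgt
  positivity

variable {n : ℕ} {p : ℝ}

lemma gnpProb_eq_sum_pi (A : Set (SimpleGraph (Fin n))) :
    gnpProb n p A = ∑ G ∈ Finset.univ.filter (fun G => G ∈ A),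
      ∏ e : Slot n, (if (e : Sym2 (Fin n)) ∈ G.edgeSet then p else 1 - p) :=
  Finset.sum_congr rfl fun G _ => weight_eq_prod G

lemma gnpProb_cylinder (E : Finset (Sym2 (Fin n))) (hE : ∀ e ∈ E, ¬ e.IsDiag) :
    gnpProb n p {G | ∀ e ∈ E, e ∈ G.edgeSet} = p ^ E.card := by
  classical
  set t : Slot n → Finset Bool := fun e => if (e : Sym2 (Fin n)) ∈ E then {true} else Finset.univ
    with ht
  rw [gnpProb_eq_sum_pi]
  trans (∑ x ∈ Fintype.piFinset t, ∏ e : Slot n, (if x e then p else 1 - p))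
  · apply Finset.sum_nbij' (fun G => fun e : Slot n => decide ((e : Sym2 (Fin n)) ∈ G.edgeSet))
      (fun x => SimpleGraph.fromEdgeSet
        {e : Sym2 (Fin n) | ∃ h : ¬ e.IsDiag, x ⟨e, h⟩ = true})
    · intro G hG
      simp only [Finset.mem_filter, Set.mem_setOf_eq] at hG
      rw [Fintype.mem_piFinset]
      intro e
      by_cases he : (e : Sym2 (Fin n)) ∈ E
      · simp [ht, he, hG.2 _ he]
      · have : t e = Finset.univ := by simp [ht, he]
        rw [this]; exact Finset.mem_univ _
    · intro x hx
      rw [Fintype.mem_piFinset] at hx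
      simp only [Finset.mem_filter, Set.mem_setOf_eq, Finset.mem_univ, true_and]
      intro e he
      rw [SimpleGraph.edgeSet_fromEdgeSet]
      have hd := hE e he
      refine ⟨⟨hd, ?_⟩, hd⟩
      have := hx ⟨e, hd⟩
      simpa [ht, he] using this
    · intro G hG
      conv_rhs => rw [← SimpleGraph.fromEdgeSet_edgeSet G]
      congr 1
      ext e
      simp only [Set.mem_setOf_eq, decide_eq_true_eq]
      constructor
      · rintro ⟨h, h2⟩; exact h2
      · intro h; exact ⟨G.not_isDiag_of_mem_edgeSet h, h⟩
    · intro x hx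
      funext e
      have hne : ¬ (e : Sym2 (Fin n)).IsDiag := e.2
      have hiff : ((e : Sym2 (Fin n)) ∈ (SimpleGraph.fromEdgeSet
          {e : Sym2 (Fin n) | ∃ h : ¬ e.IsDiag, x ⟨e, h⟩ = true}).edgeSet) ↔ x e = true := by
        rw [SimpleGraph.edgeSet_fromEdgeSet]
        constructor
        · rintro ⟨⟨h, h2⟩, -⟩; exact h2
        · intro h; exact ⟨⟨e.2, h⟩, hne⟩
      rcases Bool.eq_false_or_eq_true (x e) with h | h
      · rw [h]; convert decide_eq_true (hiff.mpr h)
      · rw [h]; convert decide_eq_false (fun hh => by have := hiff.mp hh; rw [h] at this; exact Bool.false_ne_true this)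
    · intro G hG
      apply Finset.prod_congr rfl
      intro e _
      by_cases he : (e : Sym2 (Fin n)) ∈ G.edgeSet <;> simp [he]
  · rw [← Finset.prod_univ_sum t (fun _ b => if b then p else 1 - p)]
    have heach : ∀ e : Slot n, (∑ b ∈ t e, if b then p else 1 - p)
        = if (e : Sym2 (Fin n)) ∈ E then p else 1 := by
      intro e
      by_cases he : (e : Sym2 (Fin n)) ∈ E
      · simp [ht, he]
      · have : t e = Finset.univ := by simp [ht, he]
        rw [this]
        have h2 : ∑ b : Bool, (if b then p else 1 - p) = (1 - p) + p := by
          simp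
        rw [h2, if_neg he]
        ring
    rw [Finset.prod_congr rfl fun e _ => heach e, Finset.prod_ite, Finset.prod_const,
      Finset.prod_const, one_pow, mul_one]
    congr 1
    apply Finset.card_bij (fun (e : Slot n) _ => (e : Sym2 (Fin n)))
    · intro e he
      simpa using (Finset.mem_filter.mp he).2
    · intro a _ b _ hab
      exact Subtype.ext hab
    · intro e he
      exact ⟨⟨e, hE e he⟩, by simpa using he, rfl⟩

lemma gnpProb_nonneg (hp0 : 0 ≤ p) (hp1 : p ≤ 1) (A : Set (SimpleGraph (Fin n))) :
    0 ≤ gnpProb n p A := by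
  apply Finset.sum_nonneg
  intro G _
  have h1 : (0:ℝ) ≤ 1 - p := by linarith
  positivity

lemma gnpProb_mono (hp0 : 0 ≤ p) (hp1 : p ≤ 1) {A B : Set (SimpleGraph (Fin n))}
    (h : A ⊆ B) : gnpProb n p A ≤ gnpProb n p B := by
  apply Finset.sum_le_sum_of_subset_of_nonneg
  · intro G hG
    simp only [Finset.mem_filter, Finset.mem_univ, true_and] at *
    exact h hG
  · intro G _ _
    have h1 : (0:ℝ) ≤ 1 - p := by linarith
    positivity

lemma gnpProb_union_le (hp0 : 0 ≤ p) (hp1 : p ≤ 1) (A B : Set (SimpleGraph (Fin n))) :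
    gnpProb n p (A ∪ B) ≤ gnpProb n p A + gnpProb n p B := by
  rw [gnpProb_eq_wgt n p (A ∪ B), gnpProb_eq_wgt n p A, gnpProb_eq_wgt n p B]
  have key := Finset.sum_union_inter
    (s₁ := Finset.univ.filter (fun G : SimpleGraph (Fin n) => G ∈ A))
    (s₂ := Finset.univ.filter (fun G : SimpleGraph (Fin n) => G ∈ B)) (f := wgt n p)
  have h2 := Finset.sum_nonneg (fun G (_ : G ∈ (Finset.univ.filter
      (fun G : SimpleGraph (Fin n) => G ∈ A)) ∩ (Finset.univ.filter
      (fun G : SimpleGraph (Fin n) => G ∈ B))) => wgt_nonneg hp0 hp1 G)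
  refine le_trans (Finset.sum_le_sum_of_subset_of_nonneg
    (t := (Finset.univ.filter (fun G : SimpleGraph (Fin n) => G ∈ A)) ∪
      (Finset.univ.filter (fun G : SimpleGraph (Fin n) => G ∈ B))) ?_ ?_)
    ((le_add_of_nonneg_right h2).trans (le_of_eq key))
  · intro G hG
    simp only [Finset.mem_filter, Finset.mem_union, Finset.mem_univ, true_and,
      Set.mem_union] at *
    tauto
  · intro G _ _
    exact wgt_nonneg hp0 hp1 G

lemma gnpProb_biUnion_le (hp0 : 0 ≤ p) (hp1 : p ≤ 1) {ι : Type*}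
    (s : Finset ι) (A : ι → Set (SimpleGraph (Fin n))) :
    gnpProb n p {G | ∃ i ∈ s, G ∈ A i} ≤ ∑ i ∈ s, gnpProb n p (A i) := by
  classical
  induction s using Finset.induction with
  | empty => simp [gnpProb]
  | insert a s hni ih =>
    rw [Finset.sum_insert hni]
    have hsub : {G : SimpleGraph (Fin n) | ∃ i ∈ insert a s, G ∈ A i}
        ⊆ A a ∪ {G | ∃ i ∈ s, G ∈ A i} := by
      rintro G ⟨i, hi, hGi⟩
      rcases Finset.mem_insert.mp hi with rfl | hi
      · exact Or.inl hGi
      · exact Or.inr ⟨i, hi, hGi⟩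
    exact le_trans (gnpProb_mono hp0 hp1 hsub)
      (le_trans (gnpProb_union_le hp0 hp1 _ _) (add_le_add_right ih _))

end ErProof2


namespace ErProof
open Finset ErProof2

lemma tree_verts_ncard {n : ℕ} {G : SimpleGraph (Fin n)} (H : G.Subgraph)
    (h : H.coe.IsTree) : H.verts.ncard = H.edgeSet.ncard + 1 := by
  classical
  have hft := h.card_edgeFinset (V := H.verts)
  have h1 : H.verts.ncard = Fintype.card H.verts := by
    rw [Set.ncard_eq_toFinset_card', Set.toFinset_card]
  have h2 : H.coe.edgeFinset.card = H.coe.edgeSet.ncard := by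
    rw [SimpleGraph.edgeFinset, Set.ncard_eq_toFinset_card']
  have h3 : H.coe.edgeSet.ncard = H.edgeSet.ncard := by
    rw [← SimpleGraph.Subgraph.image_coe_edgeSet_coe H]
    exact (Set.ncard_image_of_injective _ (Sym2.map.injective Subtype.val_injective)).symm
  omega

/-- From the failure of the neighbour bound, extract a configuration. -/
lemma exists_config {n k : ℕ} (hk : 1 ≤ k) (Tn : ℕ) (L : ℝ) (G : SimpleGraph (Fin n))
    (hT : ∀ t : ℕ, (t : ℝ) ≤ L → t ≤ Tn)
    (hbad : ¬ ∀ (m : ℕ), m ≤ k → ∀ P : Fin m → G.Subgraph,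
      (∀ i, (P i).coe.IsTree) →
      (∀ i, ((P i).edgeSet.ncard : ℝ) ≤ L) →
      (∀ i j, i ≠ j → Disjoint (P i).verts (P j).verts) →
      ∀ v : Fin n, (∀ i, v ∉ (P i).verts) →
        ({w ∈ ⋃ i, (P i).verts | G.Adj v w}).ncard ≤ 12 * k + 1) :
    ∃ t ≤ Tn, ∃ v : Fin n, ∃ W : Finset (Fin n), W.card = t + 1 ∧ v ∉ W ∧
      ∃ F : Finset (Sym2 (Fin n)), F ⊆ W.sym2 ∧ (∀ e ∈ F, ¬ e.IsDiag) ∧ F.card = t ∧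
      ∃ N : Finset (Fin n), N ⊆ W ∧ N.card = 13 ∧
      (∀ e ∈ F, e ∈ G.edgeSet) ∧ (∀ w ∈ N, G.Adj v w) := by
  push_neg at hbad
  obtain ⟨m, hm, P, htree, hsize, hdisj, v, hv, hcount⟩ := hbad
  -- Finset versions of the neighbour sets
  set S : Fin m → Finset (Fin n) :=
    fun i => Finset.univ.filter (fun w => w ∈ (P i).verts ∧ G.Adj v w) with hS
  have hunion : {w | w ∈ ⋃ i, (P i).verts ∧ G.Adj v w}
      = ↑(Finset.univ.biUnion S) := by
    ext w
    simp [hS, Set.mem_iUnion]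
  have hcount' : 12 * k + 2 ≤ (Finset.univ.biUnion S).card := by
    have h := hcount
    rw [hunion, Set.ncard_coe_finset] at h
    omega
  have hpig : ∃ i, 13 ≤ (S i).card := by
    by_contra hall
    push_neg at hall
    have : (Finset.univ.biUnion S).card ≤ ∑ i, (S i).card := Finset.card_biUnion_le
    have h12 : ∑ i, (S i).card ≤ 12 * m := by
      calc ∑ i, (S i).card ≤ ∑ _i : Fin m, 12 := Finset.sum_le_sum (fun i _ => by
              have := hall i; omega)
        _ = 12 * m := by simp [Finset.sum_const, mul_comm]
      
    have : 12 * k + 2 ≤ 12 * m := le_trans hcount' (le_trans this h12)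
    omega
  obtain ⟨i, hi⟩ := hpig
  set T := P i with hTdef
  set t := T.edgeSet.ncard with htdef
  have htn : t ≤ Tn := hT t (hsize i)
  have hvfin : T.verts.Finite := Set.toFinite _
  have hefin : T.edgeSet.Finite := Set.toFinite _
  refine ⟨t, htn, v, hvfin.toFinset, ?_, ?_, hefin.toFinset, ?_, ?_, ?_, ?_⟩
  · rw [← Set.ncard_eq_toFinset_card _ hvfin]
    exact tree_verts_ncard T (htree i)
  · simp only [Set.Finite.mem_toFinset]
    exact hv i
  · intro e he
    simp only [Set.Finite.mem_toFinset] at he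
    induction e with
    | _ a b =>
      rw [Finset.mk_mem_sym2_iff]
      constructor <;> simp only [Set.Finite.mem_toFinset]
      · exact T.edge_vert he
      · exact T.edge_vert (T.adj_symm he)
  · intro e he
    simp only [Set.Finite.mem_toFinset] at he
    exact G.not_isDiag_of_mem_edgeSet (T.edgeSet_subset he)
  · rw [← Set.ncard_eq_toFinset_card _ hefin]
  · refine ?_
    obtain ⟨N, hNsub, hNcard⟩ := Finset.exists_subset_card_eq hi
    refine ⟨N, ?_, hNcard, ?_, ?_⟩
    · intro w hw
      have := hNsub hw
      simp only [hS, Finset.mem_filter] at this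
      simp only [Set.Finite.mem_toFinset]
      exact this.2.1
    · intro e he
      simp only [Set.Finite.mem_toFinset] at he
      exact T.edgeSet_subset he
    · intro w hw
      have := hNsub hw
      simp only [hS, Finset.mem_filter] at this
      exact this.2.2


/-- the elementary event -/
def EvC (n : ℕ) (v : Fin n) (W : Finset (Fin n)) (F : Finset (Sym2 (Fin n)))
    (N : Finset (Fin n)) : Set (SimpleGraph (Fin n)) :=
  {G | v ∉ W ∧ (∀ e ∈ F, e ∈ G.edgeSet) ∧ (∀ w ∈ N, G.Adj v w)}

variable {n : ℕ} {p : ℝ}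

lemma gnpProb_empty : gnpProb n p (∅ : Set (SimpleGraph (Fin n))) = 0 := by
  unfold gnpProb
  refine (Finset.sum_congr (Finset.eq_empty_of_forall_notMem ?_) (fun x _ => rfl)).trans
    Finset.sum_empty
  intro G hG
  simp only [Finset.mem_filter] at hG
  exact hG.2

lemma prob_EvC (hp0 : 0 ≤ p) (hp1 : p ≤ 1) {t : ℕ} {v : Fin n} {W : Finset (Fin n)}
    {F : Finset (Sym2 (Fin n))} {N : Finset (Fin n)}
    (hF : F ⊆ W.sym2) (hFd : ∀ e ∈ F, ¬ e.IsDiag) (hFc : F.card = t)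
    (hN : N ⊆ W) (hNc : N.card = 13) :
    gnpProb n p (EvC n v W F N) ≤ p ^ (t + 13) := by
  by_cases hvW : v ∈ W
  · have : EvC n v W F N = ∅ := by
      ext G
      simp [EvC, hvW]
    rw [this, gnpProb_empty]
    positivity
  · set E' : Finset (Sym2 (Fin n)) := F ∪ N.image (fun w => s(v, w)) with hE'
    have hvnotin : ∀ e ∈ F, v ∉ e := by
      intro e he hve
      have := hF he
      rw [Finset.mem_sym2_iff] at this
      exact hvW (this v hve)
    have hdisj : Disjoint F (N.image (fun w => s(v, w))) := by
      rw [Finset.disjoint_right]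
      intro e he
      simp only [Finset.mem_image] at he
      obtain ⟨w, hw, rfl⟩ := he
      intro heF
      exact hvnotin _ heF (Sym2.mem_mk_left v w)
    have hinj : Set.InjOn (fun w => s(v, w)) ↑N := by
      intro a _ b _ hab
      have := Sym2.congr_right.mp hab
      exact this
    have hcard : E'.card = t + 13 := by
      rw [hE', Finset.card_union_of_disjoint hdisj, hFc,
        Finset.card_image_of_injOn hinj, hNc]
    have hd : ∀ e ∈ E', ¬ e.IsDiag := by
      intro e he
      rw [hE', Finset.mem_union] at he
      rcases he with he | he
      · exact hFd e he
      · simp only [Finset.mem_image] at he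
        obtain ⟨w, hw, rfl⟩ := he
        simp only [Sym2.isDiag_iff_proj_eq]
        intro hvw
        exact hvW (hvw ▸ hN hw)
    have hsub : EvC n v W F N ⊆ {G | ∀ e ∈ E', e ∈ G.edgeSet} := by
      rintro G ⟨-, hGF, hGN⟩
      intro e he
      rw [hE', Finset.mem_union] at he
      rcases he with he | he
      · exact hGF e he
      · simp only [Finset.mem_image] at he
        obtain ⟨w, hw, rfl⟩ := he
        exact hGN w hw
    calc gnpProb n p (EvC n v W F N) ≤ gnpProb n p {G | ∀ e ∈ E', e ∈ G.edgeSet} :=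
          gnpProb_mono hp0 hp1 hsub
      _ = p ^ E'.card := gnpProb_cylinder E' hd
      _ = p ^ (t + 13) := by rw [hcard]

/-- nested union events -/
def B4 (n : ℕ) (v : Fin n) (W : Finset (Fin n)) (F : Finset (Sym2 (Fin n))) :
    Set (SimpleGraph (Fin n)) :=
  {G | ∃ N ∈ W.powersetCard 13, G ∈ EvC n v W F N}

def B3 (n t : ℕ) (v : Fin n) (W : Finset (Fin n)) : Set (SimpleGraph (Fin n)) :=
  {G | ∃ F ∈ (W.sym2.filter (fun e => ¬ e.IsDiag)).powersetCard t, G ∈ B4 n v W F}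

def B2 (n t : ℕ) (v : Fin n) : Set (SimpleGraph (Fin n)) :=
  {G | ∃ W ∈ (Finset.univ : Finset (Fin n)).powersetCard (t + 1), G ∈ B3 n t v W}

def B1 (n t : ℕ) : Set (SimpleGraph (Fin n)) :=
  {G | ∃ v ∈ (Finset.univ : Finset (Fin n)), G ∈ B2 n t v}

lemma prob_B1 (hp0 : 0 ≤ p) (hp1 : p ≤ 1) (t : ℕ) :
    gnpProb n p (B1 n t) ≤
      (n : ℝ) * (n.choose (t + 1)) * (((t + 2).choose 2).choose t) *
        ((t + 1).choose 13) * p ^ (t + 13) := by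
  have hp13 : (0:ℝ) ≤ p ^ (t + 13) := by positivity
  have hB3 : ∀ (v : Fin n) (W : Finset (Fin n)), W.card = t + 1 →
      gnpProb n p (B3 n t v W) ≤
        (((t + 2).choose 2).choose t) * ((t + 1).choose 13) * p ^ (t + 13) := by
    intro v W hW
    have hB4 : ∀ F ∈ (W.sym2.filter (fun e => ¬ e.IsDiag)).powersetCard t,
        gnpProb n p (B4 n v W F) ≤ ((t + 1).choose 13) * p ^ (t + 13) := by
      intro F hFmem
      rw [Finset.mem_powersetCard] at hFmem
      obtain ⟨hFsub, hFc⟩ := hFmem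
      have hF : F ⊆ W.sym2 := fun e he => (Finset.mem_filter.mp (hFsub he)).1
      have hFd : ∀ e ∈ F, ¬ e.IsDiag := fun e he => (Finset.mem_filter.mp (hFsub he)).2
      calc gnpProb n p (B4 n v W F)
          ≤ ∑ N ∈ W.powersetCard 13, gnpProb n p (EvC n v W F N) :=
            gnpProb_biUnion_le hp0 hp1 _ _
        _ ≤ ∑ N ∈ W.powersetCard 13, p ^ (t + 13) := by
            apply Finset.sum_le_sum
            intro N hN
            rw [Finset.mem_powersetCard] at hN
            exact prob_EvC hp0 hp1 hF hFd hFc hN.1 hN.2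
        _ = ((t + 1).choose 13) * p ^ (t + 13) := by
            rw [Finset.sum_const, Finset.card_powersetCard, hW, nsmul_eq_mul]
    calc gnpProb n p (B3 n t v W)
        ≤ ∑ F ∈ (W.sym2.filter (fun e => ¬ e.IsDiag)).powersetCard t,
            gnpProb n p (B4 n v W F) := gnpProb_biUnion_le hp0 hp1 _ _
      _ ≤ ∑ F ∈ (W.sym2.filter (fun e => ¬ e.IsDiag)).powersetCard t,
            (((t + 1).choose 13) * p ^ (t + 13) : ℝ) := Finset.sum_le_sum hB4
      _ = (((W.sym2.filter (fun e => ¬ e.IsDiag)).card).choose t : ℝ) *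
            (((t + 1).choose 13) * p ^ (t + 13)) := by
          rw [Finset.sum_const, Finset.card_powersetCard, nsmul_eq_mul]
      _ ≤ (((t + 2).choose 2).choose t : ℝ) * (((t + 1).choose 13) * p ^ (t + 13)) := by
          apply mul_le_mul_of_nonneg_right _ (by positivity)
          have hle : (W.sym2.filter (fun e => ¬ e.IsDiag)).card ≤ (t + 2).choose 2 := by
            calc (W.sym2.filter (fun e => ¬ e.IsDiag)).card ≤ W.sym2.card :=
                  Finset.card_filter_le _ _
              _ = (W.card + 1).choose 2 := Finset.card_sym2 W
              _ = (t + 2).choose 2 := by rw [hW]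
          exact_mod_cast Nat.choose_le_choose t hle
      _ = (((t + 2).choose 2).choose t : ℝ) * ((t + 1).choose 13) * p ^ (t + 13) := by ring
  have hB2 : ∀ v : Fin n, gnpProb n p (B2 n t v) ≤
      (n.choose (t + 1)) * (((t + 2).choose 2).choose t) * ((t + 1).choose 13) *
        p ^ (t + 13) := by
    intro v
    calc gnpProb n p (B2 n t v)
        ≤ ∑ W ∈ (Finset.univ : Finset (Fin n)).powersetCard (t + 1),
            gnpProb n p (B3 n t v W) := gnpProb_biUnion_le hp0 hp1 _ _
      _ ≤ ∑ W ∈ (Finset.univ : Finset (Fin n)).powersetCard (t + 1),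
            ((((t + 2).choose 2).choose t : ℝ) * ((t + 1).choose 13) * p ^ (t + 13)) := by
          apply Finset.sum_le_sum
          intro W hWmem
          rw [Finset.mem_powersetCard_univ] at hWmem
          exact hB3 v W hWmem
      _ = (n.choose (t + 1) : ℝ) * ((((t + 2).choose 2).choose t : ℝ) *
            ((t + 1).choose 13) * p ^ (t + 13)) := by
          rw [Finset.sum_const, Finset.card_powersetCard, nsmul_eq_mul]
          simp
      _ = (n.choose (t + 1) : ℝ) * (((t + 2).choose 2).choose t) * ((t + 1).choose 13) *
            p ^ (t + 13) := by ring
  calc gnpProb n p (B1 n t)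
      ≤ ∑ _v ∈ (Finset.univ : Finset (Fin n)),
          ((n.choose (t + 1) : ℝ) * (((t + 2).choose 2).choose t) * ((t + 1).choose 13) *
            p ^ (t + 13)) :=
        le_trans (gnpProb_biUnion_le hp0 hp1 _ _) (Finset.sum_le_sum fun v _ => hB2 v)
    _ = (n : ℝ) * ((n.choose (t + 1) : ℝ) * (((t + 2).choose 2).choose t) *
          ((t + 1).choose 13) * p ^ (t + 13)) := by
        rw [Finset.sum_const, nsmul_eq_mul]
        simp
    _ = _ := by ring


/-- single-term analytic bound -/
lemma term_bound {n t Tn : ℕ} {p K : ℝ}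
    (hK3 : (3:ℝ) ≤ K)
    (h1 : 2 ≤ Real.log n)
    (hp0 : 0 ≤ p)
    (hp4 : p ≤ K * Real.log n / n)
    (h6 : (Tn : ℝ) + 1 ≤ Real.log n)
    (h7 : 2 + Real.log K ≤ (1/5) * Real.log (Real.log n))
    (h8 : Real.exp 4 * K ^ 13 * (Real.log n) ^ 26 ≤ n)
    (h9 : (Tn : ℝ) * Real.log (Real.log n) ≤ 5/2 * Real.log n)
    (ht : t ≤ Tn) :
    (n : ℝ) * (n.choose (t + 1)) * ((((t + 2).choose 2).choose t)) *
      ((t + 1).choose 13) * p ^ (t + 13) ≤ 1 / (n : ℝ) ^ 7 := by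
  set x : ℝ := (n : ℝ) with hxdef
  set X : ℝ := Real.log x with hXdef
  set Y : ℝ := Real.log X with hYdef
  have hX2 : 2 ≤ X := h1
  have hX0 : (0:ℝ) < X := by linarith
  have hx0 : (0:ℝ) < x := by
    rcases eq_or_lt_of_le (show (0:ℝ) ≤ x from Nat.cast_nonneg n) with h | h
    · exfalso
      have : X = 0 := by rw [hXdef, ← h, Real.log_zero]
      linarith
    · exact h
  have hY : 10 ≤ Y := by
    have : (0:ℝ) ≤ Real.log K := Real.log_nonneg (by linarith)
    linarith
  have hY0 : (0:ℝ) < Y := by linarith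
  have hK0 : (0:ℝ) < K := by linarith
  have hKX0 : (0:ℝ) < K * X := by positivity
  have hF1 : (0:ℝ) < ((t+1).factorial : ℝ) := by positivity
  have hF2 : (0:ℝ) < ((t).factorial : ℝ) := by positivity
  -- A1
  have hA1 : ((n.choose (t+1) : ℕ) : ℝ) ≤ x ^ (t+1) / ((t+1).factorial : ℝ) := by
    have h := Nat.choose_le_pow_div (α := ℝ) (t+1) n
    refine h.trans (le_of_eq ?_)
    push_cast
    ring
  -- A2
  have hA2 : (((((t + 2).choose 2).choose t) : ℕ) : ℝ) ≤ ((t+2:ℝ)) ^ (2*t) / ((t).factorial : ℝ) := by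
    have h := Nat.choose_le_pow_div (α := ℝ) t ((t + 2).choose 2)
    have hM : (((t + 2).choose 2 : ℕ) : ℝ) ≤ ((t+2:ℝ))^2 := by
      have := Nat.choose_le_pow (t+2) 2
      push_cast
      exact_mod_cast this
    calc (((((t + 2).choose 2).choose t) : ℕ) : ℝ)
        ≤ ((((t + 2).choose 2 : ℕ) : ℝ)) ^ t / ((t).factorial : ℝ) := h
      _ ≤ (((t+2:ℝ))^2) ^ t / ((t).factorial : ℝ) := by
          gcongr <;> first | exact Nat.cast_nonneg _ | exact hM
      _ = ((t+2:ℝ)) ^ (2*t) / ((t).factorial : ℝ) := by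
          rw [← pow_mul]
  -- A3
  have htX : (t : ℝ) + 1 ≤ X := by
    have : (t:ℝ) ≤ (Tn:ℝ) := by exact_mod_cast ht
    linarith
  have hA3 : (((t + 1).choose 13 : ℕ) : ℝ) ≤ X ^ 13 := by
    calc (((t + 1).choose 13 : ℕ) : ℝ) ≤ ((t+1:ℝ)) ^ 13 := by
          have := Nat.choose_le_pow (t+1) 13
          exact_mod_cast this
      _ ≤ X ^ 13 := by
          apply pow_le_pow_left₀ (by positivity) (by push_cast; linarith)
  -- A4
  have hpKX : p ≤ K * X / x := hp4
  have hA4 : p ^ (t+13) ≤ (K * X / x) ^ (t + 13) := pow_le_pow_left₀ hp0 hpKX _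
  -- exponential bounds
  have hexp1 : ((t+2:ℝ)) ^ t / ((t).factorial : ℝ) ≤ Real.exp ((t:ℝ) + 2) := by
    have hsum := Real.sum_le_exp_of_nonneg (x := ((t:ℝ)+2)) (by positivity) (t+1)
    refine le_trans ?_ hsum
    have := Finset.single_le_sum (f := fun i => ((t:ℝ)+2) ^ i / (i).factorial)
      (fun i _ => by positivity) (Finset.self_mem_range_succ t)
    exact this
  have hexp2 : ((t+2:ℝ)) ^ t / ((t+1).factorial : ℝ) ≤ Real.exp ((t:ℝ) + 2) := by
    refine le_trans ?_ hexp1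
    apply div_le_div_of_nonneg_left (by positivity) hF2
    exact_mod_cast Nat.factorial_le (Nat.le_succ t)
  -- key exponent estimate
  have key : (Real.exp 2 * (K * X)) ^ t ≤ x ^ 3 := by
    have ha0 : (0:ℝ) < Real.exp 2 * (K * X) := by positivity
    have hlog : Real.log (Real.exp 2 * (K * X)) = 2 + (Real.log K + Y) := by
      rw [Real.log_mul (by positivity) (by positivity), Real.log_exp,
        Real.log_mul (ne_of_gt hK0) (ne_of_gt hX0)]
    have hle : (t : ℝ) * Real.log (Real.exp 2 * (K * X)) ≤ 3 * X := by
      rw [hlog]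
      have h75 : 2 + (Real.log K + Y) ≤ (6/5) * Y := by linarith
      have htY : (t:ℝ) * Y ≤ (Tn:ℝ) * Y := by
        apply mul_le_mul_of_nonneg_right _ (le_of_lt hY0)
        exact_mod_cast ht
      have ht0 : (0:ℝ) ≤ (t:ℝ) := by positivity
      calc (t : ℝ) * (2 + (Real.log K + Y)) ≤ (t:ℝ) * ((6/5) * Y) := by
            apply mul_le_mul_of_nonneg_left h75 ht0
        _ = (6/5) * ((t:ℝ) * Y) := by ring
        _ ≤ (6/5) * ((Tn:ℝ) * Y) := by linarith
        _ ≤ (6/5) * (5/2 * X) := by linarith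
        _ = 3 * X := by ring
    calc (Real.exp 2 * (K * X)) ^ t
        = Real.exp ((t : ℝ) * Real.log (Real.exp 2 * (K * X))) := by
          rw [Real.exp_nat_mul, Real.exp_log ha0]
      _ ≤ Real.exp (3 * X) := Real.exp_le_exp.mpr hle
      _ = x ^ 3 := by
          rw [show (3:ℝ) * X = (3:ℕ) * X by push_cast; ring, Real.exp_nat_mul,
            Real.exp_log hx0]
  -- the multiplicative core
  have big : x ^ (t+2) * ((t+2:ℝ)) ^ (2*t) * X ^ 13 * (K * X) ^ (t+13) * x ^ 7
      ≤ ((t+1).factorial : ℝ) * ((t).factorial : ℝ) * x ^ (t+13) := by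
    have hfact : ((t+2:ℝ)) ^ (2*t) ≤ ((t+1).factorial : ℝ) * ((t).factorial : ℝ) * Real.exp (2*(t:ℝ)+4) := by
      have e1 := hexp1
      have e2 := hexp2
      rw [div_le_iff₀ hF2] at e1
      rw [div_le_iff₀ hF1] at e2
      calc ((t+2:ℝ)) ^ (2*t) = ((t+2:ℝ)) ^ t * ((t+2:ℝ)) ^ t := by
            rw [← pow_add]; ring_nf
        _ ≤ (Real.exp ((t:ℝ)+2) * ((t).factorial : ℝ)) * (Real.exp ((t:ℝ)+2) * ((t+1).factorial : ℝ)) := by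
            apply mul_le_mul (by exact_mod_cast e1) (by exact_mod_cast e2) (by positivity)
              (by positivity)
        _ = ((t+1).factorial : ℝ) * ((t).factorial : ℝ) * Real.exp (2*(t:ℝ)+4) := by
            rw [show Real.exp (2*(t:ℝ)+4) = Real.exp ((t:ℝ)+2) * Real.exp ((t:ℝ)+2) by
              rw [← Real.exp_add]; ring_nf]
            ring
    calc x ^ (t+2) * ((t+2:ℝ)) ^ (2*t) * X ^ 13 * (K * X) ^ (t+13) * x ^ 7
        ≤ x ^ (t+2) * (((t+1).factorial : ℝ) * ((t).factorial : ℝ) * Real.exp (2*(t:ℝ)+4)) * X ^ 13 *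
            (K * X) ^ (t+13) * x ^ 7 := by
          gcongr
      _ = (((t+1).factorial : ℝ) * ((t).factorial : ℝ)) * ((Real.exp 2 * (K * X)) ^ t *
            (Real.exp 4 * K ^ 13 * X ^ 26)) * (x ^ t * x ^ 9) := by
          rw [show Real.exp (2*(t:ℝ)+4) = Real.exp 2 ^ t * Real.exp 4 by
            rw [← Real.exp_nat_mul, ← Real.exp_add]; ring_nf]
          ring
      _ ≤ (((t+1).factorial : ℝ) * ((t).factorial : ℝ)) * (x ^ 3 * x) * (x ^ t * x ^ 9) := by
          gcongr
      _ = ((t+1).factorial : ℝ) * ((t).factorial : ℝ) * x ^ (t+13) := by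
          rw [pow_add x t 13]
          ring
  -- assemble
  have hchain : (n : ℝ) * (n.choose (t + 1)) * ((((t + 2).choose 2).choose t)) *
      ((t + 1).choose 13) * p ^ (t + 13)
      ≤ x * (x ^ (t+1) / ((t+1).factorial : ℝ)) * (((t+2:ℝ)) ^ (2*t) / ((t).factorial : ℝ)) * X ^ 13 *
        (K * X / x) ^ (t+13) := by
    gcongr <;> first | exact hA1 | exact hA2 | exact hA3 | exact hA4
  refine hchain.trans ?_
  rw [div_pow]
  have hnum : x * (x ^ (t+1) / ((t+1).factorial : ℝ)) * ((t+2:ℝ) ^ (2*t) / ((t).factorial : ℝ))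
      * X ^ 13 * ((K*X) ^ (t+13) / x ^ (t+13))
      = (x ^ (t+2) * (t+2:ℝ) ^ (2*t) * X ^ 13 * (K*X) ^ (t+13)) /
        (((t+1).factorial : ℝ) * ((t).factorial : ℝ) * x ^ (t+13)) := by
    field_simp
    ring
  rw [hnum, div_le_div_iff₀ (by positivity) (by positivity), one_mul]
  calc x ^ (t+2) * (t+2:ℝ) ^ (2*t) * X ^ 13 * (K*X) ^ (t+13) * x ^ 7
      = x ^ (t+2) * ((t+2:ℝ)) ^ (2*t) * X ^ 13 * (K * X) ^ (t+13) * x ^ 7 := by ring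
    _ ≤ ((t+1).factorial : ℝ) * ((t).factorial : ℝ) * x ^ (t+13) := big


end ErProof

end

/-- With probability `1 − o(n⁻³)`, for every collection of at most `k` pairwise
vertex-disjoint subtrees of `G(n, p(n))`, each with at most `(5/2)·D` edges, every vertex
outside the collection has at most `12k + 1` neighbours in it, where `D = log n/log log n`:
the probability of the complementary event is `o(n⁻³)`. -/
theorem few_neighbours_in_forest (k : ℕ) (hk : 1 ≤ k) :
    (fun n : ℕ =>
      gnpProb n ((Real.log n + ((k : ℝ) + 1) * Real.log (Real.log n) -
          Real.log (Real.log (Real.log n))) / n)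
        {G : SimpleGraph (Fin n) | ¬ ∀ (m : ℕ), m ≤ k → ∀ P : Fin m → G.Subgraph,
          (∀ i, (P i).coe.IsTree) →
          (∀ i, ((P i).edgeSet.ncard : ℝ) ≤ 5 / 2 * (Real.log n / Real.log (Real.log n))) →
          (∀ i j, i ≠ j → Disjoint (P i).verts (P j).verts) →
          ∀ v : Fin n, (∀ i, v ∉ (P i).verts) →
            ({w ∈ ⋃ i, (P i).verts | G.Adj v w}).ncard ≤ 12 * k + 1})
      =o[atTop] fun n : ℕ => (n : ℝ) ^ (-3 : ℝ) := by
  classical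
  set K : ℝ := (k : ℝ) + 2 with hKdef
  have hk1 : (1 : ℝ) ≤ (k : ℝ) := by exact_mod_cast hk
  have hK3 : (3 : ℝ) ≤ K := by rw [hKdef]; linarith
  have hK0 : (0 : ℝ) < K := by linarith
  -- eventual facts
  have evlog : ∀ᶠ n : ℕ in atTop, 2 ≤ Real.log n :=
    (Real.tendsto_log_atTop.comp tendsto_natCast_atTop_atTop).eventually_ge_atTop 2
  have evll : ∀ᶠ n : ℕ in atTop,
      (10 : ℝ) ⊔ (5 * (2 + Real.log K)) ≤ Real.log (Real.log n) :=
    (Real.tendsto_log_atTop.comp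
      (Real.tendsto_log_atTop.comp tendsto_natCast_atTop_atTop)).eventually_ge_atTop _
  have evpoly : ∀ᶠ n : ℕ in atTop,
      Real.exp 4 * K ^ 13 * (Real.log n) ^ 26 ≤ (n : ℝ) := by
    have hC : (0 : ℝ) < Real.exp 4 * K ^ 13 := by positivity
    have h0 := Real.tendsto_pow_log_div_mul_add_atTop 1 0 26 one_ne_zero
    have h1 := (h0.comp tendsto_natCast_atTop_atTop).eventually
      (gt_mem_nhds (show (0:ℝ) < (Real.exp 4 * K ^ 13)⁻¹ by positivity))
    have h2 : ∀ᶠ n : ℕ in atTop, (0:ℝ) < (n : ℝ) :=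
      tendsto_natCast_atTop_atTop.eventually_gt_atTop 0
    filter_upwards [h1, h2] with n hn hx
    have hn' : (Real.log n) ^ 26 / (n : ℝ) < (Real.exp 4 * K ^ 13)⁻¹ := by
      simpa using hn
    rw [div_lt_iff₀ hx] at hn'
    have h3 := mul_lt_mul_of_pos_left hn' hC
    rw [← mul_assoc, mul_inv_cancel₀ (ne_of_gt hC), one_mul] at h3
    linarith
  -- the main eventual bound
  have main : ∀ᶠ n : ℕ in atTop,
      0 ≤ gnpProb n ((Real.log n + ((k : ℝ) + 1) * Real.log (Real.log n) -
          Real.log (Real.log (Real.log n))) / n)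
        {G : SimpleGraph (Fin n) | ¬ ∀ (m : ℕ), m ≤ k → ∀ P : Fin m → G.Subgraph,
          (∀ i, (P i).coe.IsTree) →
          (∀ i, ((P i).edgeSet.ncard : ℝ) ≤ 5 / 2 * (Real.log n / Real.log (Real.log n))) →
          (∀ i j, i ≠ j → Disjoint (P i).verts (P j).verts) →
          ∀ v : Fin n, (∀ i, v ∉ (P i).verts) →
            ({w ∈ ⋃ i, (P i).verts | G.Adj v w}).ncard ≤ 12 * k + 1} ∧
      gnpProb n ((Real.log n + ((k : ℝ) + 1) * Real.log (Real.log n) -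
          Real.log (Real.log (Real.log n))) / n)
        {G : SimpleGraph (Fin n) | ¬ ∀ (m : ℕ), m ≤ k → ∀ P : Fin m → G.Subgraph,
          (∀ i, (P i).coe.IsTree) →
          (∀ i, ((P i).edgeSet.ncard : ℝ) ≤ 5 / 2 * (Real.log n / Real.log (Real.log n))) →
          (∀ i j, i ≠ j → Disjoint (P i).verts (P j).verts) →
          ∀ v : Fin n, (∀ i, v ∉ (P i).verts) →
            ({w ∈ ⋃ i, (P i).verts | G.Adj v w}).ncard ≤ 12 * k + 1}
        ≤ 1 / (n : ℝ) ^ 4 := by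
    filter_upwards [evlog, evll, evpoly] with n hlog hll hpoly
    set x : ℝ := (n : ℝ) with hxdef
    set X : ℝ := Real.log x with hXdef
    set Y : ℝ := Real.log X with hYdef
    have hX2 : 2 ≤ X := hlog
    have hX0 : (0:ℝ) < X := by linarith
    have hx0 : (0:ℝ) < x := by
      rcases eq_or_lt_of_le (show (0:ℝ) ≤ x from Nat.cast_nonneg n) with h | h
      · exfalso
        have : X = 0 := by rw [hXdef, ← h, Real.log_zero]
        linarith
      · exact h
    have hx1 : (1:ℝ) ≤ x := by
      have := Real.log_le_sub_one_of_pos hx0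
      linarith
    have hY10 : (10:ℝ) ≤ Y := le_trans (le_max_left _ _) hll
    have h7 : 2 + Real.log K ≤ (1/5) * Y := by
      have := le_trans (le_max_right _ _) hll
      linarith
    have hY0 : (0:ℝ) < Y := by linarith
    have hYX : Y ≤ X := Real.log_le_self (le_of_lt hX0)
    have hXx : X ≤ x := Real.log_le_self (le_of_lt hx0)
    set pv : ℝ := (X + ((k : ℝ) + 1) * Y - Real.log Y) / x with hpv
    have hlogY0 : 0 ≤ Real.log Y := Real.log_nonneg (by linarith)
    have hlogYY : Real.log Y ≤ Y := Real.log_le_self (le_of_lt hY0)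
    have hnum0 : 0 ≤ X + ((k : ℝ) + 1) * Y - Real.log Y := by nlinarith
    have hnum4 : X + ((k : ℝ) + 1) * Y - Real.log Y ≤ K * X := by
      have h1 : ((k : ℝ) + 1) * Y ≤ ((k : ℝ) + 1) * X :=
        mul_le_mul_of_nonneg_left hYX (by linarith)
      rw [hKdef]
      nlinarith
    have hp0 : 0 ≤ pv := div_nonneg hnum0 (le_of_lt hx0)
    have hp4 : pv ≤ K * X / x := by
      rw [hpv]
      gcongr
    have hKXx : K * X ≤ x := by
      have e1 : K ≤ K ^ 13 := le_self_pow₀ (by linarith) (by norm_num)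
      have e2 : X ≤ X ^ 26 := le_self_pow₀ (by linarith) (by norm_num)
      have e3 : K * X ≤ K ^ 13 * X ^ 26 :=
        mul_le_mul e1 e2 (by linarith) (by positivity)
      have e4 : (1:ℝ) ≤ Real.exp 4 := by
        have := Real.add_one_le_exp (4:ℝ)
        linarith
      have e5 : K ^ 13 * X ^ 26 ≤ Real.exp 4 * (K ^ 13 * X ^ 26) :=
        le_mul_of_one_le_left (by positivity) e4
      calc K * X ≤ K ^ 13 * X ^ 26 := e3
        _ ≤ Real.exp 4 * (K ^ 13 * X ^ 26) := e5
        _ = Real.exp 4 * K ^ 13 * X ^ 26 := by ring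
        _ ≤ x := hpoly
    have hp1 : pv ≤ 1 := le_trans hp4 (by rw [div_le_one hx0]; exact hKXx)
    set TN : ℕ := Nat.floor ((5:ℝ)/2 * (X / Y)) with hTN
    have hT : ∀ t : ℕ, (t : ℝ) ≤ 5/2 * (X / Y) → t ≤ TN := fun t ht => Nat.le_floor ht
    have hTle : (TN : ℝ) ≤ 5/2 * (X / Y) := Nat.floor_le (by positivity)
    have h9 : (TN : ℝ) * Y ≤ 5/2 * X := by
      calc (TN : ℝ) * Y ≤ (5/2 * (X / Y)) * Y :=
            mul_le_mul_of_nonneg_right hTle (le_of_lt hY0)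
        _ = 5/2 * X := by field_simp
    have h6 : (TN : ℝ) + 1 ≤ X := by
      have hXY10 : X / Y ≤ X / 10 :=
        div_le_div_of_nonneg_left (by linarith) (by norm_num) hY10
      have : (TN : ℝ) ≤ 5/2 * (X / 10) := le_trans hTle (by linarith)
      linarith
    -- inclusion into the union of events
    have hsub : {G : SimpleGraph (Fin n) | ¬ ∀ (m : ℕ), m ≤ k → ∀ P : Fin m → G.Subgraph,
          (∀ i, (P i).coe.IsTree) →
          (∀ i, ((P i).edgeSet.ncard : ℝ) ≤ 5 / 2 * (Real.log n / Real.log (Real.log n))) →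
          (∀ i j, i ≠ j → Disjoint (P i).verts (P j).verts) →
          ∀ v : Fin n, (∀ i, v ∉ (P i).verts) →
            ({w ∈ ⋃ i, (P i).verts | G.Adj v w}).ncard ≤ 12 * k + 1}
        ⊆ {G : SimpleGraph (Fin n) | ∃ t ∈ Finset.range (TN + 1), G ∈ ErProof.B1 n t} := by
      intro G hG
      obtain ⟨t, htn, v, W, hW, hvW, F, hFsym, hFd, hFc, N, hNsub, hNc, hFE, hNadj⟩ :=
        ErProof.exists_config hk TN (5/2 * (X / Y)) G hT hG
      refine ⟨t, Finset.mem_range.mpr (by omega), v, Finset.mem_univ v,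
        W, Finset.mem_powersetCard_univ.mpr hW,
        F, Finset.mem_powersetCard.mpr
          ⟨fun e he => Finset.mem_filter.mpr ⟨hFsym he, hFd e he⟩, hFc⟩,
        N, Finset.mem_powersetCard.mpr ⟨hNsub, hNc⟩, hvW, hFE, hNadj⟩
    refine ⟨ErProof2.gnpProb_nonneg hp0 hp1 _, ?_⟩
    calc gnpProb n pv _ ≤ gnpProb n pv
          {G : SimpleGraph (Fin n) | ∃ t ∈ Finset.range (TN + 1), G ∈ ErProof.B1 n t} :=
          ErProof2.gnpProb_mono hp0 hp1 hsub
      _ ≤ ∑ t ∈ Finset.range (TN + 1), gnpProb n pv (ErProof.B1 n t) :=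
          ErProof2.gnpProb_biUnion_le hp0 hp1 _ _
      _ ≤ ∑ t ∈ Finset.range (TN + 1), 1 / x ^ 7 := by
          apply Finset.sum_le_sum
          intro t htm
          have ht' : t ≤ TN := by
            have := Finset.mem_range.mp htm
            omega
          exact le_trans (ErProof.prob_B1 hp0 hp1 t)
            (ErProof.term_bound hK3 hX2 hp0 hp4 h6 h7 hpoly h9 ht')
      _ = ((TN : ℝ) + 1) * (1 / x ^ 7) := by
          rw [Finset.sum_const, Finset.card_range, nsmul_eq_mul]
          push_cast
          ring
      _ ≤ x * (1 / x ^ 7) := by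
          have : (TN : ℝ) + 1 ≤ x := le_trans h6 hXx
          gcongr
      _ = 1 / x ^ 6 := by
          field_simp
      _ ≤ 1 / x ^ 4 := by
          apply div_le_div_of_nonneg_left (by norm_num) (by positivity)
          exact pow_le_pow_right₀ hx1 (by norm_num)
  -- conclude
  rw [isLittleO_iff]
  intro c hc
  have evc : ∀ᶠ n : ℕ in atTop, (1:ℝ) ≤ (n:ℝ) ∧ 1/c ≤ (n:ℝ) := by
    filter_upwards [(tendsto_natCast_atTop_atTop (R := ℝ)).eventually_ge_atTop 1,
      (tendsto_natCast_atTop_atTop (R := ℝ)).eventually_ge_atTop (1/c)] with n h1 h2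
    exact ⟨h1, h2⟩
  filter_upwards [main, evc] with n hmain hevc
  obtain ⟨hge0, hle⟩ := hmain
  obtain ⟨hx1, hxc⟩ := hevc
  have hx0 : (0:ℝ) < (n:ℝ) := lt_of_lt_of_le zero_lt_one hx1
  rw [Real.norm_eq_abs, Real.norm_eq_abs, abs_of_nonneg hge0,
    abs_of_nonneg (by positivity : (0:ℝ) ≤ (n:ℝ) ^ (-3 : ℝ))]
  have hr : (n:ℝ) ^ (-3 : ℝ) = 1 / (n:ℝ) ^ 3 := by
    rw [Real.rpow_neg (le_of_lt hx0), one_div]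
    congr 1
    rw [show ((3:ℝ)) = ((3:ℕ) : ℝ) by norm_num, Real.rpow_natCast]
  rw [hr]
  have h1c : 1 ≤ c * (n:ℝ) := by
    have := (div_le_iff₀ hc).mp hxc
    linarith
  refine le_trans hle ?_
  rw [div_le_iff₀ (by positivity), mul_comm c, mul_assoc, one_div,
    inv_mul_eq_div, le_div_iff₀ (by positivity)]
  nlinarith [pow_pos hx0 3, pow_pos hx0 4]
end

section
/- Let k ≥ 1 be a fixed integer and p(n) = (log n + (k+1)·log log n − log log log n)/n. Then almost surely the following three statements hold simultaneously in G(n, p(n)): (1) every neighbor of a small vertex is a large vertex; (2) every large vertex has at most one small neighbor; (3) no two distinct small vertices have a common neighbor. -/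
open Filter Asymptotics
open scoped Classical

noncomputable section

namespace SVF

abbrev Slot (n : ℕ) := {e : Sym2 (Fin n) // ¬ e.IsDiag}

lemma mem_fromEdgeSet_aux {n : ℕ} (f : {e : Sym2 (Fin n) // ¬ e.IsDiag} → Bool)
    (s : {e : Sym2 (Fin n) // ¬ e.IsDiag}) :
    s.1 ∈ (SimpleGraph.fromEdgeSet {e | ∃ h : ¬ e.IsDiag, f ⟨e, h⟩ = true}).edgeSet
      ↔ f s = true := by
  rw [SimpleGraph.edgeSet_fromEdgeSet]
  constructor
  · rintro ⟨⟨h1, h2⟩, -⟩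
    convert h2
  · intro hf
    exact ⟨⟨s.2, by convert hf⟩, s.2⟩

def graphEquiv (n : ℕ) : SimpleGraph (Fin n) ≃ (Slot n → Bool) where
  toFun G s := decide (s.1 ∈ G.edgeSet)
  invFun f := SimpleGraph.fromEdgeSet {e | ∃ h : ¬ e.IsDiag, f ⟨e, h⟩ = true}
  left_inv G := by
    have h : {e | ∃ h : ¬ e.IsDiag, (decide (e ∈ G.edgeSet) : Bool) = true} = G.edgeSet := by
      ext e
      simp only [Set.mem_setOf_eq, decide_eq_true_eq]
      exact ⟨fun ⟨_, he⟩ => he, fun he => ⟨G.not_isDiag_of_mem_edgeSet he, he⟩⟩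
    simp only [h, SimpleGraph.fromEdgeSet_edgeSet]
  right_inv f := by
    funext s
    have h := mem_fromEdgeSet_aux f s
    by_cases hf : f s = true
    · simp only [hf, iff_true] at h
      simp [h, hf, s.2]
    · simp only [Bool.not_eq_true] at hf
      simp only [hf, Bool.false_eq_true, iff_false] at h
      simp [h, hf, s.2]

variable {n : ℕ}

lemma mem_edgeSet_symm (f : Slot n → Bool) (s : Slot n) :
    s.1 ∈ ((graphEquiv n).symm f).edgeSet ↔ f s = true :=
  mem_fromEdgeSet_aux f s

/-- Master identity. -/
lemma sum_prod_slot (a b : Slot n → ℝ) :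
    ∑ G : SimpleGraph (Fin n), ∏ s : Slot n, (if s.1 ∈ G.edgeSet then a s else b s)
      = ∏ s : Slot n, (a s + b s) := by
  rw [← Equiv.sum_comp (graphEquiv n).symm
    (fun G => ∏ s : Slot n, (if s.1 ∈ G.edgeSet then a s else b s))]
  have : ∀ f : Slot n → Bool,
      (∏ s : Slot n, if s.1 ∈ ((graphEquiv n).symm f).edgeSet then a s else b s)
        = ∏ s : Slot n, (if f s then a s else b s) := by
    intro f
    refine Finset.prod_congr rfl fun s _ => ?_
    by_cases hf : f s = true
    · rw [if_pos ((mem_edgeSet_symm f s).2 hf), if_pos hf]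
    · rw [if_neg (fun hc => hf ((mem_edgeSet_symm f s).1 hc)), if_neg hf]
  rw [Finset.sum_congr rfl fun f _ => this f]
  rw [← Fintype.prod_sum (fun (s : Slot n) (j : Bool) => if j then a s else b s)]
  refine Finset.prod_congr rfl fun s _ => ?_
  simp [Fintype.sum_bool]


/-- The weight of a graph as a product over slots. -/
def W (n : ℕ) (p : ℝ) (G : SimpleGraph (Fin n)) : ℝ :=
  ∏ s : Slot n, (if s.1 ∈ G.edgeSet then p else 1 - p)

lemma card_slot (n : ℕ) : Fintype.card (Slot n) = n.choose 2 := by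
  rw [Sym2.card_subtype_not_diag, Fintype.card_fin]

lemma card_filter_mem_edgeSet (G : SimpleGraph (Fin n)) :
    (Finset.univ.filter (fun s : Slot n => s.1 ∈ G.edgeSet)).card = edgeCount G := by
  classical
  unfold edgeCount
  refine Finset.card_bij (fun s _ => s.1) ?_ ?_ ?_
  · intro s hs
    simp only [Finset.mem_filter] at hs
    rw [SimpleGraph.mem_edgeFinset]
    exact hs.2
  · intro a ha b hb hab
    exact Subtype.ext hab
  · intro e he
    rw [SimpleGraph.mem_edgeFinset] at he
    exact ⟨⟨e, G.not_isDiag_of_mem_edgeSet he⟩, by simp [he], rfl⟩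

lemma W_eq (p : ℝ) (G : SimpleGraph (Fin n)) :
    W n p G = p ^ edgeCount G * (1 - p) ^ (n.choose 2 - edgeCount G) := by
  classical
  unfold W
  rw [Finset.prod_ite (fun _ => p) (fun _ => 1 - p), Finset.prod_const, Finset.prod_const]
  congr 1
  · rw [card_filter_mem_edgeSet]
  · congr 1
    have h1 := Finset.card_filter_add_card_filter_not
      (s := (Finset.univ : Finset (Slot n))) (p := fun s : Slot n => s.1 ∈ G.edgeSet)
    rw [Finset.card_univ, card_slot] at h1
    rw [card_filter_mem_edgeSet] at h1
    omega

lemma gnp_eq (p : ℝ) (A : Set (SimpleGraph (Fin n))) :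
    gnpProb n p A = ∑ G : SimpleGraph (Fin n), (if G ∈ A then W n p G else 0) := by
  unfold gnpProb
  rw [Finset.sum_filter]
  refine Finset.sum_congr rfl fun G _ => ?_
  rw [W_eq]

lemma W_nonneg {p : ℝ} (hp0 : 0 ≤ p) (hp1 : p ≤ 1) (G : SimpleGraph (Fin n)) :
    0 ≤ W n p G := by
  refine Finset.prod_nonneg fun s _ => ?_
  split <;> linarith

lemma sum_W (p : ℝ) : ∑ G : SimpleGraph (Fin n), W n p G = 1 := by
  unfold W
  rw [sum_prod_slot (fun _ => p) (fun _ => 1 - p)]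
  simp

lemma gnp_nonneg {p : ℝ} (hp0 : 0 ≤ p) (hp1 : p ≤ 1) (A : Set (SimpleGraph (Fin n))) :
    0 ≤ gnpProb n p A := by
  rw [gnp_eq]
  refine Finset.sum_nonneg fun G _ => ?_
  split
  · exact W_nonneg hp0 hp1 G
  · exact le_rfl

lemma gnp_le_one {p : ℝ} (hp0 : 0 ≤ p) (hp1 : p ≤ 1) (A : Set (SimpleGraph (Fin n))) :
    gnpProb n p A ≤ 1 := by
  rw [gnp_eq, ← sum_W (n := n) p]
  refine Finset.sum_le_sum fun G _ => ?_
  split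
  · exact le_rfl
  · exact W_nonneg hp0 hp1 G

lemma gnp_compl {p : ℝ} (A : Set (SimpleGraph (Fin n))) :
    gnpProb n p A + gnpProb n p Aᶜ = 1 := by
  rw [gnp_eq, gnp_eq, ← Finset.sum_add_distrib, ← sum_W (n := n) p]
  refine Finset.sum_congr rfl fun G _ => ?_
  by_cases h : G ∈ A
  · simp [h]
  · simp [h, Set.mem_compl_iff]

/-- Union bound. -/
lemma gnp_union_bound {p : ℝ} (hp0 : 0 ≤ p) (hp1 : p ≤ 1)
    {ι : Type*} [Fintype ι] (A : Set (SimpleGraph (Fin n))) (I : Finset ι)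
    (B : ι → Set (SimpleGraph (Fin n)))
    (hAB : ∀ G ∈ A, ∃ i ∈ I, G ∈ B i) :
    gnpProb n p A ≤ ∑ i ∈ I, gnpProb n p (B i) := by
  simp_rw [gnp_eq]
  rw [Finset.sum_comm]
  refine Finset.sum_le_sum fun G _ => ?_
  by_cases hG : G ∈ A
  · obtain ⟨i, hi, hBi⟩ := hAB G hG
    rw [if_pos hG]
    calc W n p G = ∑ j ∈ {i}, (if G ∈ B j then W n p G else 0) := by simp [hBi]
    _ ≤ ∑ j ∈ I, (if G ∈ B j then W n p G else 0) := by
        refine Finset.sum_le_sum_of_subset_of_nonneg (by simpa using hi) fun j _ _ => ?_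
        split
        · exact W_nonneg hp0 hp1 G
        · exact le_rfl
  · rw [if_neg hG]
    refine Finset.sum_nonneg fun i _ => ?_
    split
    · exact W_nonneg hp0 hp1 G
    · exact le_rfl

/-- Core bound: if membership in `A` forces `1 ≤ ∏ φ`, then
the probability of `A` is at most the factorised expectation of `∏ φ`. -/
lemma gnp_le_prod {p : ℝ} (hp0 : 0 ≤ p) (hp1 : p ≤ 1)
    (A : Set (SimpleGraph (Fin n))) (φ : Slot n → Bool → ℝ)
    (hφ : ∀ s b, 0 ≤ φ s b)
    (hA : ∀ G ∈ A, (1:ℝ) ≤ ∏ s : Slot n, φ s (decide (s.1 ∈ G.edgeSet))) :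
    gnpProb n p A ≤ ∏ s : Slot n, ((1 - p) * φ s false + p * φ s true) := by
  classical
  rw [gnp_eq]
  have key : ∀ G : SimpleGraph (Fin n),
      (if G ∈ A then W n p G else 0)
        ≤ ∏ s : Slot n, (if s.1 ∈ G.edgeSet then p * φ s true else (1 - p) * φ s false) := by
    intro G
    have hnn : (0:ℝ) ≤ ∏ s : Slot n, φ s (decide (s.1 ∈ G.edgeSet)) :=
      Finset.prod_nonneg fun s _ => hφ _ _
    have hprod : ∏ s : Slot n, (if s.1 ∈ G.edgeSet then p * φ s true else (1 - p) * φ s false)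
        = W n p G * ∏ s : Slot n, φ s (decide (s.1 ∈ G.edgeSet)) := by
      unfold W
      rw [← Finset.prod_mul_distrib]
      refine Finset.prod_congr rfl fun s _ => ?_
      by_cases h : s.1 ∈ G.edgeSet
      · simp [h]
      · simp [h]
    rw [hprod]
    by_cases hG : G ∈ A
    · rw [if_pos hG]
      have := hA G hG
      nlinarith [W_nonneg hp0 hp1 G]
    · rw [if_neg hG]
      exact mul_nonneg (W_nonneg hp0 hp1 G) hnn
  calc ∑ G : SimpleGraph (Fin n), (if G ∈ A then W n p G else 0)
      ≤ ∑ G : SimpleGraph (Fin n), ∏ s : Slot n,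
          (if s.1 ∈ G.edgeSet then p * φ s true else (1 - p) * φ s false) :=
        Finset.sum_le_sum fun G _ => key G
    _ = ∏ s : Slot n, ((1 - p) * φ s false + p * φ s true) := by
        rw [sum_prod_slot]
        refine Finset.prod_congr rfl fun s _ => ?_
        ring


lemma slot_eq_of_mem_mem {s : Slot n} {u v : Fin n} (huv : u ≠ v)
    (hu : u ∈ s.1) (hv : v ∈ s.1) : s.1 = s(u, v) := by
  rw [← Sym2.other_spec' hu] at hv ⊢
  rcases Sym2.mem_iff.1 hv with h | h
  · exact absurd h.symm huv
  · rw [Sym2.congr_right]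
    exact h.symm

lemma card_slots_through (u : Fin n) (E : Finset (Fin n)) (hu : u ∉ E) :
    (Finset.univ.filter (fun s : Slot n => u ∈ s.1 ∧ ∀ x ∈ E, s.1 ≠ s(u, x))).card
      = n - 1 - E.card := by
  classical
  have hins : insert u E ⊆ Finset.univ := Finset.subset_univ _
  have hcard : (Finset.univ \ insert u E).card = n - 1 - E.card := by
    rw [Finset.card_sdiff_of_subset hins, Finset.card_insert_of_notMem hu, Finset.card_univ,
      Fintype.card_fin]
    omega
  rw [← hcard]
  refine Finset.card_bij' (fun s hs => Sym2.Mem.other' (Finset.mem_filter.1 hs).2.1)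
    (fun x hx => ⟨s(u, x), by
      rw [Sym2.mk_isDiag_iff]
      intro hux
      rw [Finset.mem_sdiff, Finset.mem_insert] at hx
      exact hx.2 (Or.inl hux.symm)⟩) ?_ ?_ ?_ ?_
  · intro s hs
    obtain ⟨-, hmem, hne⟩ := Finset.mem_filter.1 hs
    rw [Finset.mem_sdiff, Finset.mem_insert]
    refine ⟨Finset.mem_univ _, fun hc => ?_⟩
    rcases hc with h1 | h1
    · have h1' : Sym2.Mem.other' hmem = u := h1
      apply s.2
      rw [← Sym2.other_spec' hmem, h1', Sym2.mk_isDiag_iff]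
    · have h1' : Sym2.Mem.other' hmem ∈ E := h1
      exact hne _ h1' (Sym2.other_spec' hmem).symm
  · intro x hx
    rw [Finset.mem_sdiff, Finset.mem_insert] at hx
    push_neg at hx
    refine Finset.mem_filter.2 ⟨Finset.mem_univ _, Sym2.mem_mk_left u x, fun y hy hc => ?_⟩
    rw [Sym2.congr_right] at hc
    exact hx.2.2 (hc ▸ hy)
  · intro s hs
    obtain ⟨-, hmem, -⟩ := Finset.mem_filter.1 hs
    exact Subtype.ext (Sym2.other_spec' hmem)
  · intro x hx
    have hmem : u ∈ s(u, x) := Sym2.mem_mk_left u x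
    have := Sym2.other_spec' (z := s(u,x)) (a := u) hmem
    rw [Sym2.congr_right] at this
    convert this using 2

lemma card_le_degree (G : SimpleGraph (Fin n)) (u : Fin n) (T : Finset (Slot n))
    (hT : ∀ s ∈ T, u ∈ s.1 ∧ s.1 ∈ G.edgeSet) : T.card ≤ G.degree u := by
  classical
  rw [← SimpleGraph.card_neighborFinset_eq_degree]
  refine Finset.card_le_card_of_injOn
    (fun s => if h : u ∈ s.1 then Sym2.Mem.other' h else u) (fun s hs => ?_) ?_
  · obtain ⟨hmem, hedge⟩ := hT s hs
    show (if h : u ∈ s.1 then Sym2.Mem.other' h else u) ∈ _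
    rw [dif_pos hmem, Finset.mem_coe, SimpleGraph.mem_neighborFinset, ← SimpleGraph.mem_edgeSet,
      Sym2.other_spec' hmem]
    exact hedge
  · intro s1 hs1 s2 hs2 heq
    simp only [Finset.mem_coe] at hs1 hs2
    obtain ⟨h1, -⟩ := hT s1 hs1
    obtain ⟨h2, -⟩ := hT s2 hs2
    simp only [dif_pos h1, dif_pos h2] at heq
    apply Subtype.ext
    rw [← Sym2.other_spec' h1, ← Sym2.other_spec' h2, heq]


def slotMk {n : ℕ} (u v : Fin n) (huv : u ≠ v) : Slot n :=
  ⟨s(u, v), by rw [Sym2.mk_isDiag_iff]; exact huv⟩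

@[simp] lemma slotMk_val {u v : Fin n} (huv : u ≠ v) : (slotMk u v huv).1 = s(u, v) := rfl

lemma prod_if_const (T : Finset (Slot n)) (P : Slot n → Prop) [DecidablePred P] (c : ℝ) :
    (∏ s ∈ T, if P s then c else 1) = c ^ (T.filter P).card := by
  classical
  rw [Finset.prod_ite (fun _ => c) (fun _ => (1:ℝ)), Finset.prod_const, Finset.prod_const,
    one_pow, mul_one]

lemma one_le_64_mul (t Y : ℕ) (hY : Y ≤ 2 * t) :
    (1:ℝ) ≤ (64:ℝ) ^ (2 * t) * (1/64 : ℝ) ^ Y := by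
  have h1 : (1/64 : ℝ) ^ Y = ((64:ℝ) ^ Y)⁻¹ := by
    rw [one_div, inv_pow]
  have h2 : (0:ℝ) < (64:ℝ) ^ Y := by positivity
  rw [h1, ← div_eq_mul_inv, le_div_iff₀ h2, one_mul]
  exact pow_le_pow_right₀ (by norm_num) hY

lemma pr_bad1 {p : ℝ} (hp0 : 0 ≤ p) (hp1 : p ≤ 1) (t : ℕ) {u v : Fin n} (huv : u ≠ v) :
    gnpProb n p {G : SimpleGraph (Fin n) | G.Adj u v ∧ G.degree u ≤ t ∧ G.degree v ≤ t}
      ≤ p * 64 ^ (2*t) * (1 - (63/64) * p) ^ (2 * (n - 2)) := by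
  classical
  set e0 : Slot n := slotMk u v huv with he0
  set Cu : Slot n → Prop := fun s => u ∈ s.1 ∧ s.1 ≠ s(u,v) with hCu
  set Cv : Slot n → Prop := fun s => v ∈ s.1 ∧ s.1 ≠ s(u,v) with hCv
  set φ : Slot n → Bool → ℝ := fun s b =>
    if s = e0 then (if b then (64:ℝ)^(2*t) else 0)
    else if Cu s ∨ Cv s then (if b then 1/64 else 1) else 1 with hφ
  -- cardinality of the conditioned slots
  have hcu : ((Finset.univ.erase e0).filter Cu).card = n - 2 := by
    have heq : (Finset.univ.erase e0).filter Cu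
        = Finset.univ.filter (fun s : Slot n => u ∈ s.1 ∧ ∀ x ∈ ({v} : Finset (Fin n)),
            s.1 ≠ s(u,x)) := by
      ext s
      simp only [Finset.mem_filter, Finset.mem_erase, Finset.mem_univ, true_and, and_true,
        Finset.mem_singleton, hCu]
      constructor
      · rintro ⟨hne, hmem, hne2⟩
        exact ⟨hmem, fun x hx => hx ▸ hne2⟩
      · rintro ⟨hmem, h⟩
        refine ⟨fun hc => (h v rfl) ?_, hmem, h v rfl⟩
        rw [hc, he0, slotMk_val]
    rw [heq, card_slots_through u {v} (by simpa using huv), Finset.card_singleton]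
    omega
  have hcv : ((Finset.univ.erase e0).filter Cv).card = n - 2 := by
    have heq : (Finset.univ.erase e0).filter Cv
        = Finset.univ.filter (fun s : Slot n => v ∈ s.1 ∧ ∀ x ∈ ({u} : Finset (Fin n)),
            s.1 ≠ s(v,x)) := by
      ext s
      simp only [Finset.mem_filter, Finset.mem_erase, Finset.mem_univ, true_and, and_true,
        Finset.mem_singleton, hCv]
      constructor
      · rintro ⟨hne, hmem, hne2⟩
        refine ⟨hmem, fun x hx => ?_⟩
        subst hx
        rw [Sym2.eq_swap]
        exact hne2
      · rintro ⟨hmem, h⟩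
        have h2 := h u rfl
        rw [Sym2.eq_swap] at h2
        refine ⟨fun hc => h2 ?_, hmem, h2⟩
        rw [hc, he0, slotMk_val]
    rw [heq, card_slots_through v {u} (by simpa using huv.symm), Finset.card_singleton]
    omega
  have hdisj : Disjoint ((Finset.univ.erase e0).filter Cu)
      ((Finset.univ.erase e0).filter Cv) := by
    rw [Finset.disjoint_left]
    intro s h1 h2
    rw [Finset.mem_filter] at h1 h2
    exact h1.2.2 (slot_eq_of_mem_mem huv h1.2.1 h2.2.1)
  have hD : ((Finset.univ.erase e0).filter (fun s => Cu s ∨ Cv s)).card = 2*(n-2) := by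
    rw [Finset.filter_or, Finset.card_union_of_disjoint hdisj, hcu, hcv]
    ring
  refine le_trans (gnp_le_prod hp0 hp1 _ φ ?_ ?_) (le_of_eq ?_)
  · intro s b
    rw [hφ]
    dsimp only
    split_ifs <;> positivity
  · -- the event forces 1 ≤ ∏ φ
    intro G hG
    obtain ⟨hadj, hdu, hdv⟩ := hG
    rw [← Finset.mul_prod_erase Finset.univ _ (Finset.mem_univ e0)]
    have hfe0 : φ e0 (decide (e0.1 ∈ G.edgeSet)) = (64:ℝ)^(2*t) := by
      have hmem : e0.1 ∈ G.edgeSet := by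
        rw [he0, slotMk_val, SimpleGraph.mem_edgeSet]
        exact hadj
      rw [hφ]
      simp [hmem]
    rw [hfe0]
    have hfac : ∀ s ∈ Finset.univ.erase e0, φ s (decide (s.1 ∈ G.edgeSet))
        = if (Cu s ∨ Cv s) ∧ s.1 ∈ G.edgeSet then (1/64:ℝ) else 1 := by
      intro s hs
      have hne : s ≠ e0 := (Finset.mem_erase.1 hs).1
      rw [hφ]
      by_cases hC : Cu s ∨ Cv s
      · by_cases hE : s.1 ∈ G.edgeSet
        · simp [hne, hC, hE]
        · simp [hne, hC, hE]
      · simp [hne, hC]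
    rw [Finset.prod_congr rfl hfac, prod_if_const]
    refine one_le_64_mul t _ ?_
    have hsub : (Finset.univ.erase e0).filter (fun s => (Cu s ∨ Cv s) ∧ s.1 ∈ G.edgeSet)
        ⊆ (Finset.univ.erase e0).filter (fun s => Cu s ∧ s.1 ∈ G.edgeSet)
          ∪ (Finset.univ.erase e0).filter (fun s => Cv s ∧ s.1 ∈ G.edgeSet) := by
      intro s hs
      rw [Finset.mem_filter] at hs
      rw [Finset.mem_union, Finset.mem_filter, Finset.mem_filter]
      tauto
    calc ((Finset.univ.erase e0).filter (fun s => (Cu s ∨ Cv s) ∧ s.1 ∈ G.edgeSet)).card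
        ≤ _ := Finset.card_le_card hsub
      _ ≤ _ := Finset.card_union_le _ _
      _ ≤ 2 * t := by
          have b1 : ((Finset.univ.erase e0).filter (fun s => Cu s ∧ s.1 ∈ G.edgeSet)).card
              ≤ G.degree u := by
            refine card_le_degree G u _ fun s hs => ?_
            rw [Finset.mem_filter, hCu] at hs
            exact ⟨hs.2.1.1, hs.2.2⟩
          have b2 : ((Finset.univ.erase e0).filter (fun s => Cv s ∧ s.1 ∈ G.edgeSet)).card
              ≤ G.degree v := by
            refine card_le_degree G v _ fun s hs => ?_
            rw [Finset.mem_filter, hCv] at hs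
            exact ⟨hs.2.1.1, hs.2.2⟩
          omega
  · -- compute the factorised product
    rw [← Finset.mul_prod_erase Finset.univ _ (Finset.mem_univ e0)]
    have hfe0 : (1 - p) * φ e0 false + p * φ e0 true = p * 64^(2*t) := by
      rw [hφ]
      simp
    have hfac : ∀ s ∈ Finset.univ.erase e0, (1 - p) * φ s false + p * φ s true
        = if Cu s ∨ Cv s then 1 - (63/64) * p else 1 := by
      intro s hs
      have hne : s ≠ e0 := (Finset.mem_erase.1 hs).1
      by_cases hC : Cu s ∨ Cv s
      · have h1 : φ s false = 1 := by rw [hφ]; simp [hne, hC]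
        have h2 : φ s true = 1/64 := by rw [hφ]; simp [hne, hC]
        rw [if_pos hC, h1, h2]; ring
      · have h1 : φ s false = 1 := by rw [hφ]; simp [hne, hC]
        have h2 : φ s true = 1 := by rw [hφ]; simp [hne, hC]
        rw [if_neg hC, h1, h2]; ring
    rw [hfe0, Finset.prod_congr rfl hfac, prod_if_const, hD]


set_option maxHeartbeats 1000000 in
lemma pr_bad2 {p : ℝ} (hp0 : 0 ≤ p) (hp1 : p ≤ 1) (t : ℕ) {u v w : Fin n}
    (huv : u ≠ v) (huw : u ≠ w) (hvw : v ≠ w) :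
    gnpProb n p {G : SimpleGraph (Fin n) |
        G.Adj u w ∧ G.Adj v w ∧ G.degree u ≤ t ∧ G.degree v ≤ t}
      ≤ p^2 * 64 ^ (2*t) * (1 - (63/64) * p) ^ (2 * (n - 3)) := by
  classical
  set e1 : Slot n := slotMk u w huw with he1
  set e2 : Slot n := slotMk v w hvw with he2
  have he21 : e2 ≠ e1 := by
    intro hc
    rw [he1, he2, Subtype.ext_iff, slotMk_val, slotMk_val, Sym2.congr_left] at hc
    exact huv hc.symm
  have he2mem : e2 ∈ Finset.univ.erase e1 := Finset.mem_erase.2 ⟨he21, Finset.mem_univ _⟩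
  set Cu : Slot n → Prop := fun s => u ∈ s.1 ∧ s.1 ≠ s(u,v) ∧ s.1 ≠ s(u,w) with hCu
  set Cv : Slot n → Prop := fun s => v ∈ s.1 ∧ s.1 ≠ s(u,v) ∧ s.1 ≠ s(v,w) with hCv
  set T : Finset (Slot n) := (Finset.univ.erase e1).erase e2 with hT
  set φ : Slot n → Bool → ℝ := fun s b =>
    if s = e1 then (if b then (64:ℝ)^(2*t) else 0)
    else if s = e2 then (if b then 1 else 0)
    else if Cu s ∨ Cv s then (if b then 1/64 else 1) else 1 with hφ
  have hval1 : ∀ s : Slot n, s = e1 → s.1 = s(u,w) := by rintro s rfl; rfl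
  have hval2 : ∀ s : Slot n, s = e2 → s.1 = s(v,w) := by rintro s rfl; rfl
  have hcu : (T.filter Cu).card = n - 3 := by
    have heq : T.filter Cu
        = Finset.univ.filter (fun s : Slot n => u ∈ s.1 ∧ ∀ x ∈ ({v, w} : Finset (Fin n)),
            s.1 ≠ s(u,x)) := by
      ext s
      simp only [hT, Finset.mem_filter, Finset.mem_erase, Finset.mem_univ, true_and, and_true,
        Finset.mem_insert, Finset.mem_singleton, hCu]
      constructor
      · rintro ⟨⟨hne2, hne1⟩, hmem, h1, h2⟩
        refine ⟨hmem, fun x hx => ?_⟩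
        rcases hx with rfl | rfl
        exacts [h1, h2]
      · rintro ⟨hmem, h⟩
        refine ⟨⟨fun hc => ?_, fun hc => ?_⟩, hmem, h v (Or.inl rfl), h w (Or.inr rfl)⟩
        · rcases Sym2.mem_iff.1 ((hval2 s hc) ▸ hmem) with h' | h'
          exacts [huv h', huw h']
        · exact h w (Or.inr rfl) (hval1 s hc)
    rw [heq, card_slots_through u {v, w} (by simp [huv, huw]),
      Finset.card_insert_of_notMem (by simp [hvw]), Finset.card_singleton]
    omega
  have hcv : (T.filter Cv).card = n - 3 := by
    have heq : T.filter Cv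
        = Finset.univ.filter (fun s : Slot n => v ∈ s.1 ∧ ∀ x ∈ ({u, w} : Finset (Fin n)),
            s.1 ≠ s(v,x)) := by
      ext s
      simp only [hT, Finset.mem_filter, Finset.mem_erase, Finset.mem_univ, true_and, and_true,
        Finset.mem_insert, Finset.mem_singleton, hCv]
      constructor
      · rintro ⟨⟨hne2, hne1⟩, hmem, h1, h2⟩
        refine ⟨hmem, fun x hx => ?_⟩
        rcases hx with rfl | rfl
        · rw [Sym2.eq_swap]
          exact h1
        · exact h2
      · rintro ⟨hmem, h⟩
        have h1 : s.1 ≠ s(u,v) := by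
          rw [Sym2.eq_swap]
          exact h u (Or.inl rfl)
        refine ⟨⟨fun hc => h w (Or.inr rfl) (hval2 s hc), fun hc => ?_⟩, hmem, h1,
          h w (Or.inr rfl)⟩
        rcases Sym2.mem_iff.1 ((hval1 s hc) ▸ hmem) with h' | h'
        exacts [huv h'.symm, hvw h']
    rw [heq, card_slots_through v {u, w} (by simp [huv.symm, hvw]),
      Finset.card_insert_of_notMem (by simp [huw]), Finset.card_singleton]
    omega
  have hdisj : Disjoint (T.filter Cu) (T.filter Cv) := by
    rw [Finset.disjoint_left]
    intro s h1 h2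
    rw [Finset.mem_filter] at h1 h2
    exact h1.2.2.1 (slot_eq_of_mem_mem huv h1.2.1 h2.2.1)
  have hD : (T.filter (fun s => Cu s ∨ Cv s)).card = 2*(n-3) := by
    rw [Finset.filter_or, Finset.card_union_of_disjoint hdisj, hcu, hcv]
    ring
  refine le_trans (gnp_le_prod hp0 hp1 _ φ ?_ ?_) (le_of_eq ?_)
  · intro s b
    rw [hφ]
    dsimp only
    split_ifs <;> positivity
  · intro G hG
    obtain ⟨hadjuw, hadjvw, hdu, hdv⟩ := hG
    rw [← Finset.mul_prod_erase Finset.univ _ (Finset.mem_univ e1),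
      ← Finset.mul_prod_erase _ _ he2mem]
    have hm1 : e1.1 ∈ G.edgeSet := by
      rw [he1, slotMk_val, SimpleGraph.mem_edgeSet]
      exact hadjuw
    have hm2 : e2.1 ∈ G.edgeSet := by
      rw [he2, slotMk_val, SimpleGraph.mem_edgeSet]
      exact hadjvw
    have hfe1 : φ e1 (decide (e1.1 ∈ G.edgeSet)) = (64:ℝ)^(2*t) := by
      rw [hφ]
      simp [hm1]
    have hfe2 : φ e2 (decide (e2.1 ∈ G.edgeSet)) = 1 := by
      rw [hφ]
      simp [hm2, he21]
    rw [hfe1, hfe2]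
    have hfac : ∀ s ∈ T, φ s (decide (s.1 ∈ G.edgeSet))
        = if (Cu s ∨ Cv s) ∧ s.1 ∈ G.edgeSet then (1/64:ℝ) else 1 := by
      intro s hs
      rw [hT, Finset.mem_erase, Finset.mem_erase] at hs
      obtain ⟨hne2, hne1, -⟩ := hs
      rw [hφ]
      by_cases hC : Cu s ∨ Cv s
      · by_cases hE : s.1 ∈ G.edgeSet
        · simp [hne1, hne2, hC, hE]
        · simp [hne1, hne2, hC, hE]
      · simp [hne1, hne2, hC]
    rw [show (Finset.univ.erase e1).erase e2 = T from rfl, Finset.prod_congr rfl hfac,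
      Finset.prod_ite (fun _ => (1/64:ℝ)) (fun _ => (1:ℝ)), Finset.prod_const,
      Finset.prod_const, one_pow, mul_one, one_mul]
    refine one_le_64_mul t _ ?_
    have hsub : T.filter (fun s => (Cu s ∨ Cv s) ∧ s.1 ∈ G.edgeSet)
        ⊆ T.filter (fun s => Cu s ∧ s.1 ∈ G.edgeSet)
          ∪ T.filter (fun s => Cv s ∧ s.1 ∈ G.edgeSet) := by
      intro s hs
      rw [Finset.mem_filter] at hs
      rw [Finset.mem_union, Finset.mem_filter, Finset.mem_filter]
      tauto
    calc (T.filter (fun s => (Cu s ∨ Cv s) ∧ s.1 ∈ G.edgeSet)).card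
        ≤ _ := Finset.card_le_card hsub
      _ ≤ _ := Finset.card_union_le _ _
      _ ≤ 2 * t := by
          have b1 : (T.filter (fun s => Cu s ∧ s.1 ∈ G.edgeSet)).card ≤ G.degree u := by
            refine card_le_degree G u _ fun s hs => ?_
            rw [Finset.mem_filter, hCu] at hs
            exact ⟨hs.2.1.1, hs.2.2⟩
          have b2 : (T.filter (fun s => Cv s ∧ s.1 ∈ G.edgeSet)).card ≤ G.degree v := by
            refine card_le_degree G v _ fun s hs => ?_
            rw [Finset.mem_filter, hCv] at hs
            exact ⟨hs.2.1.1, hs.2.2⟩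
          omega
  · rw [← Finset.mul_prod_erase Finset.univ _ (Finset.mem_univ e1),
      ← Finset.mul_prod_erase _ _ he2mem]
    have hfe1 : (1 - p) * φ e1 false + p * φ e1 true = p * 64^(2*t) := by
      rw [hφ]
      simp
    have hfe2 : (1 - p) * φ e2 false + p * φ e2 true = p := by
      rw [hφ]
      simp [he21]
    have hfac : ∀ s ∈ T, (1 - p) * φ s false + p * φ s true
        = if Cu s ∨ Cv s then 1 - (63/64) * p else 1 := by
      intro s hs
      rw [hT, Finset.mem_erase, Finset.mem_erase] at hs
      obtain ⟨hne2, hne1, -⟩ := hs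
      by_cases hC : Cu s ∨ Cv s
      · have h1 : φ s false = 1 := by rw [hφ]; simp [hne1, hne2, hC]
        have h2 : φ s true = 1/64 := by rw [hφ]; simp [hne1, hne2, hC]
        rw [if_pos hC, h1, h2]; ring
      · have h1 : φ s false = 1 := by rw [hφ]; simp [hne1, hne2, hC]
        have h2 : φ s true = 1 := by rw [hφ]; simp [hne1, hne2, hC]
        rw [if_neg hC, h1, h2]; ring
    rw [hfe1, hfe2, show (Finset.univ.erase e1).erase e2 = T from rfl,
      Finset.prod_congr rfl hfac,
      Finset.prod_ite (fun _ => (1 - (63/64) * p)) (fun _ => (1:ℝ)), Finset.prod_const,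
      Finset.prod_const, one_pow, mul_one, hD]
    ring


def goodSet (n : ℕ) : Set (SimpleGraph (Fin n)) :=
  {G : SimpleGraph (Fin n) |
    (∀ u v : Fin n, (G.degree u : ℝ) < Real.log n / 100 → G.Adj u v →
      Real.log n / 100 ≤ (G.degree v : ℝ)) ∧
    (∀ v w w' : Fin n, Real.log n / 100 ≤ (G.degree v : ℝ) →
      (G.degree w : ℝ) < Real.log n / 100 → (G.degree w' : ℝ) < Real.log n / 100 →
      G.Adj v w → G.Adj v w' → w = w') ∧
    (∀ u v : Fin n, u ≠ v → (G.degree u : ℝ) < Real.log n / 100 →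
      (G.degree v : ℝ) < Real.log n / 100 →
      ¬ ∃ w : Fin n, G.Adj u w ∧ G.Adj v w)}

lemma gnp_bad_upper (n : ℕ) {p : ℝ} (hp0 : 0 ≤ p) (hp1 : p ≤ 1) (t : ℕ)
    (hsm : ∀ d : ℕ, (d : ℝ) < Real.log n / 100 → d ≤ t) :
    gnpProb n p (goodSet n)ᶜ
      ≤ (n:ℝ)^2 * (p * 64^(2*t) * (1 - (63/64)*p)^(2*(n-2)))
        + (n:ℝ)^3 * (p^2 * 64^(2*t) * (1 - (63/64)*p)^(2*(n-3))) := by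
  classical
  have hβ : (0:ℝ) ≤ 1 - (63/64)*p := by linarith
  set I1 : Finset (Fin n × Fin n) := Finset.univ.filter (fun q => q.1 ≠ q.2) with hI1
  set I2 : Finset (Fin n × Fin n × Fin n) :=
    Finset.univ.filter (fun q => q.1 ≠ q.2.1 ∧ q.1 ≠ q.2.2 ∧ q.2.1 ≠ q.2.2) with hI2
  set B : (Fin n × Fin n) ⊕ (Fin n × Fin n × Fin n) → Set (SimpleGraph (Fin n)) :=
    Sum.elim
      (fun q => {G : SimpleGraph (Fin n) |
        G.Adj q.1 q.2 ∧ G.degree q.1 ≤ t ∧ G.degree q.2 ≤ t})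
      (fun q => {G : SimpleGraph (Fin n) |
        G.Adj q.1 q.2.2 ∧ G.Adj q.2.1 q.2.2 ∧ G.degree q.1 ≤ t ∧ G.degree q.2.1 ≤ t}) with hB
  have hcover : ∀ G ∈ (goodSet n)ᶜ, ∃ i ∈ I1.disjSum I2, G ∈ B i := by
    intro G hG
    rw [Set.mem_compl_iff, goodSet, Set.mem_setOf_eq, not_and_or, not_and_or] at hG
    rcases hG with h | h | h
    · push_neg at h
      obtain ⟨u, v, hsu, hadj, hsv⟩ := h
      refine ⟨Sum.inl (u, v), ?_, ?_⟩
      · rw [Finset.inl_mem_disjSum, hI1, Finset.mem_filter]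
        exact ⟨Finset.mem_univ _, hadj.ne⟩
      · exact ⟨hadj, hsm _ hsu, hsm _ hsv⟩
    · push_neg at h
      obtain ⟨v, w, w', hlv, hsw, hsw', hadj, hadj', hne⟩ := h
      refine ⟨Sum.inr (w, w', v), ?_, ?_⟩
      · rw [Finset.inr_mem_disjSum, hI2, Finset.mem_filter]
        exact ⟨Finset.mem_univ _, hne, hadj.ne', hadj'.ne'⟩
      · exact ⟨hadj.symm, hadj'.symm, hsm _ hsw, hsm _ hsw'⟩
    · push_neg at h
      obtain ⟨u, v, hne, hsu, hsv, w, hadj, hadj'⟩ := h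
      refine ⟨Sum.inr (u, v, w), ?_, ?_⟩
      · rw [Finset.inr_mem_disjSum, hI2, Finset.mem_filter]
        exact ⟨Finset.mem_univ _, hne, hadj.ne, hadj'.ne⟩
      · exact ⟨hadj, hadj', hsm _ hsu, hsm _ hsv⟩
  refine le_trans (gnp_union_bound hp0 hp1 _ (I1.disjSum I2) B hcover) ?_
  rw [Finset.sum_disjSum]
  have h1 : ∑ q ∈ I1, gnpProb n p (B (Sum.inl q))
      ≤ (n:ℝ)^2 * (p * 64^(2*t) * (1 - (63/64)*p)^(2*(n-2))) := by
    have hC1 : (0:ℝ) ≤ p * 64^(2*t) * (1 - (63/64)*p)^(2*(n-2)) := by positivity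
    calc ∑ q ∈ I1, gnpProb n p (B (Sum.inl q))
        ≤ ∑ _q ∈ I1, p * 64^(2*t) * (1 - (63/64)*p)^(2*(n-2)) := by
          refine Finset.sum_le_sum fun q hq => ?_
          rw [hI1, Finset.mem_filter] at hq
          exact pr_bad1 hp0 hp1 t hq.2
      _ = (I1.card : ℝ) * (p * 64^(2*t) * (1 - (63/64)*p)^(2*(n-2))) := by
          rw [Finset.sum_const, nsmul_eq_mul]
      _ ≤ (n:ℝ)^2 * (p * 64^(2*t) * (1 - (63/64)*p)^(2*(n-2))) := by
          refine mul_le_mul_of_nonneg_right ?_ hC1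
          have : I1.card ≤ n * n := by
            calc I1.card ≤ Fintype.card (Fin n × Fin n) := Finset.card_filter_le _ _
              _ = n * n := by rw [Fintype.card_prod, Fintype.card_fin]
          calc (I1.card : ℝ) ≤ ((n * n : ℕ) : ℝ) := by exact_mod_cast this
            _ = (n:ℝ)^2 := by push_cast; ring
  have h2 : ∑ q ∈ I2, gnpProb n p (B (Sum.inr q))
      ≤ (n:ℝ)^3 * (p^2 * 64^(2*t) * (1 - (63/64)*p)^(2*(n-3))) := by
    have hC2 : (0:ℝ) ≤ p^2 * 64^(2*t) * (1 - (63/64)*p)^(2*(n-3)) := by positivity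
    calc ∑ q ∈ I2, gnpProb n p (B (Sum.inr q))
        ≤ ∑ _q ∈ I2, p^2 * 64^(2*t) * (1 - (63/64)*p)^(2*(n-3)) := by
          refine Finset.sum_le_sum fun q hq => ?_
          rw [hI2, Finset.mem_filter] at hq
          exact pr_bad2 hp0 hp1 t hq.2.1 hq.2.2.1 hq.2.2.2
      _ = (I2.card : ℝ) * (p^2 * 64^(2*t) * (1 - (63/64)*p)^(2*(n-3))) := by
          rw [Finset.sum_const, nsmul_eq_mul]
      _ ≤ (n:ℝ)^3 * (p^2 * 64^(2*t) * (1 - (63/64)*p)^(2*(n-3))) := by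
          refine mul_le_mul_of_nonneg_right ?_ hC2
          have : I2.card ≤ n * (n * n) := by
            calc I2.card ≤ Fintype.card (Fin n × Fin n × Fin n) := Finset.card_filter_le _ _
              _ = n * (n * n) := by
                  rw [Fintype.card_prod, Fintype.card_prod, Fintype.card_fin]
          calc (I2.card : ℝ) ≤ ((n * (n * n) : ℕ) : ℝ) := by exact_mod_cast this
            _ = (n:ℝ)^3 := by push_cast; ring
  linarith

lemma gnp_good_lower (n : ℕ) {p : ℝ} (hp0 : 0 ≤ p) (hp1 : p ≤ 1) (t : ℕ)
    (hsm : ∀ d : ℕ, (d : ℝ) < Real.log n / 100 → d ≤ t) :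
    1 - ((n:ℝ)^2 * (p * 64^(2*t) * (1 - (63/64)*p)^(2*(n-2)))
        + (n:ℝ)^3 * (p^2 * 64^(2*t) * (1 - (63/64)*p)^(2*(n-3))))
      ≤ gnpProb n p (goodSet n) := by
  have hcompl := gnp_compl (n := n) (p := p) (goodSet n)
  have hbad := gnp_bad_upper n hp0 hp1 t hsm
  linarith

end SVF

end

set_option maxHeartbeats 4000000 in
/-- Almost surely, in `G(n, p(n))`: (1) every neighbour of a small vertex is large;
(2) every large vertex has at most one small neighbour; (3) no two distinct small
vertices have a common neighbour.  A vertex is large if its degree is at least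
`log n/100`, and small otherwise. -/
theorem small_vertex_facts_as (k : ℕ) (hk : 1 ≤ k) :
    Tendsto (fun n : ℕ =>
      gnpProb n ((Real.log n + ((k : ℝ) + 1) * Real.log (Real.log n) -
          Real.log (Real.log (Real.log n))) / n)
        {G : SimpleGraph (Fin n) |
          (∀ u v : Fin n, (G.degree u : ℝ) < Real.log n / 100 → G.Adj u v →
            Real.log n / 100 ≤ (G.degree v : ℝ)) ∧
          (∀ v w w' : Fin n, Real.log n / 100 ≤ (G.degree v : ℝ) →
            (G.degree w : ℝ) < Real.log n / 100 → (G.degree w' : ℝ) < Real.log n / 100 →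
            G.Adj v w → G.Adj v w' → w = w') ∧
          (∀ u v : Fin n, u ≠ v → (G.degree u : ℝ) < Real.log n / 100 →
            (G.degree v : ℝ) < Real.log n / 100 →
            ¬ ∃ w : Fin n, G.Adj u w ∧ G.Adj v w)})
      atTop (nhds 1) := by
  have hmain : Tendsto (fun n : ℕ =>
      gnpProb n ((Real.log n + ((k : ℝ) + 1) * Real.log (Real.log n) -
          Real.log (Real.log (Real.log n))) / n) (SVF.goodSet n)) atTop (nhds 1) := by
    -- basic tendsto facts
    have hlog : Tendsto (fun n : ℕ => Real.log n) atTop atTop :=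
      Real.tendsto_log_atTop.comp tendsto_natCast_atTop_atTop
    have hloglog : Tendsto (fun n : ℕ => Real.log (Real.log n)) atTop atTop :=
      Real.tendsto_log_atTop.comp hlog
    have hlll : Tendsto (fun n : ℕ => Real.log (Real.log (Real.log n))) atTop atTop :=
      Real.tendsto_log_atTop.comp hloglog
    have e1 : ∀ᶠ n : ℕ in atTop, 100 ≤ Real.log n := hlog.eventually_ge_atTop 100
    have e2 : ∀ᶠ n : ℕ in atTop, 1 ≤ Real.log (Real.log n) := hloglog.eventually_ge_atTop 1
    have e3 : ∀ᶠ n : ℕ in atTop, 0 ≤ Real.log (Real.log (Real.log n)) :=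
      hlll.eventually_ge_atTop 0
    have e4 : ∀ᶠ n : ℕ in atTop,
        ((k:ℝ) + 1) * Real.log (Real.log n) ≤ Real.log n := by
      have hlo : (fun n : ℕ => Real.log (Real.log n)) =o[atTop] (fun n : ℕ => Real.log n) :=
        Real.isLittleO_log_id_atTop.comp_tendsto hlog
      have hkpos : (0:ℝ) < 1 / ((k:ℝ) + 1) := by positivity
      filter_upwards [hlo.def hkpos, e1, e2] with n hb h1 h2
      rw [Real.norm_eq_abs, Real.norm_eq_abs, abs_of_nonneg (by linarith),
        abs_of_nonneg (by linarith)] at hb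
      have hk1 : (0:ℝ) < (k:ℝ) + 1 := by positivity
      rw [div_mul_eq_mul_div, le_div_iff₀ hk1, one_mul] at hb
      linarith
    have e5 : ∀ᶠ n : ℕ in atTop, 12 * Real.log n ≤ (n : ℝ) := by
      have hlo : (fun n : ℕ => Real.log n) =o[atTop] (fun n : ℕ => (n:ℝ)) :=
        Real.isLittleO_log_id_atTop.comp_tendsto tendsto_natCast_atTop_atTop
      filter_upwards [hlo.def (show (0:ℝ) < 1/12 by norm_num), e1] with n hb h1
      rw [Real.norm_eq_abs, Real.norm_eq_abs, abs_of_nonneg (by linarith),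
        abs_of_nonneg (by positivity)] at hb
      linarith
    have e6 : ∀ᶠ n : ℕ in atTop, 3 ≤ n := Filter.eventually_ge_atTop 3
    -- the two-sided bound
    have hbound : ∀ᶠ n : ℕ in atTop,
        1 - 6 * Real.exp (2 - (7/10) * Real.log n)
          ≤ gnpProb n ((Real.log n + ((k : ℝ) + 1) * Real.log (Real.log n) -
              Real.log (Real.log (Real.log n))) / n) (SVF.goodSet n)
        ∧ gnpProb n ((Real.log n + ((k : ℝ) + 1) * Real.log (Real.log n) -
              Real.log (Real.log (Real.log n))) / n) (SVF.goodSet n) ≤ 1 := by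
      filter_upwards [e1, e2, e3, e4, e5, e6] with n h100 hL1 hM0 hkL h12c hn3
      set c : ℝ := Real.log n with hc
      set L : ℝ := Real.log c with hL
      set M : ℝ := Real.log L with hM
      set x : ℝ := c + ((k:ℝ) + 1) * L - M with hx
      set p : ℝ := x / n with hp
      have hc0 : (0:ℝ) < c := by linarith
      have hL0 : (0:ℝ) < L := by linarith
      have hML : M ≤ L := by
        have := Real.log_le_sub_one_of_pos hL0
        linarith
      have hk1 : (2:ℝ) ≤ (k:ℝ) + 1 := by
        have : (1:ℝ) ≤ (k:ℝ) := by exact_mod_cast hk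
        linarith
      have h2L : 2 * L ≤ ((k:ℝ) + 1) * L := by nlinarith
      have hxlow : c + L ≤ x := by rw [hx]; linarith
      have hxup : x ≤ 2 * c := by rw [hx]; linarith
      have hx0 : (0:ℝ) ≤ x := by linarith
      have hnr3 : (3:ℝ) ≤ (n:ℝ) := by exact_mod_cast hn3
      have hn0 : (0:ℝ) < (n:ℝ) := by linarith
      have hp0 : 0 ≤ p := div_nonneg hx0 hn0.le
      have hpn : p * (n:ℝ) = x := div_mul_cancel₀ x hn0.ne'
      have hp1 : p ≤ 1 := by
        rw [hp, div_le_one hn0]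
        linarith
      set t : ℕ := ⌊c / 100⌋₊ with hstreet
      have hsm : ∀ d : ℕ, (d : ℝ) < Real.log n / 100 → d ≤ t :=
        fun d hd => Nat.le_floor hd.le
      have hlowP := SVF.gnp_good_lower n hp0 hp1 t hsm
      have hupP := SVF.gnp_le_one hp0 hp1 (SVF.goodSet n)
      refine ⟨le_trans ?_ hlowP, hupP⟩
      -- now bound the explicit error term
      have hβ0 : (0:ℝ) ≤ 1 - 63/64 * p := by linarith
      have hβe : 1 - 63/64 * p ≤ Real.exp (-(63/64 * p)) := by
        have := Real.add_one_le_exp (-(63/64 * p))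
        linarith
      have key : ∀ j : ℕ, j ≤ 3 → j ≤ n →
          (1 - 63/64 * p) ^ (2*(n-j)) ≤ Real.exp (2 - (19/10) * x) := by
        intro j hj hjn
        have hpj : p * (j:ℝ) ≤ 1/2 := by
          have hj3 : (j:ℝ) ≤ 3 := by exact_mod_cast hj
          have h1 : p * (j:ℝ) ≤ p * 3 := by nlinarith
          have h2 : p * 3 ≤ 1/2 := by
            rw [hp, div_mul_eq_mul_div, div_le_iff₀ hn0]
            nlinarith
          linarith
        calc (1 - 63/64 * p) ^ (2*(n-j))
            ≤ (Real.exp (-(63/64 * p))) ^ (2*(n-j)) := pow_le_pow_left₀ hβ0 hβe _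
          _ = Real.exp (((2*(n-j) : ℕ) : ℝ) * (-(63/64 * p))) := by
              rw [Real.exp_nat_mul]
          _ ≤ Real.exp (2 - (19/10) * x) := by
              apply Real.exp_le_exp.2
              have hcast : ((2*(n-j) : ℕ) : ℝ) = 2 * ((n:ℝ) - (j:ℝ)) := by
                push_cast [Nat.cast_sub hjn]
                ring
              rw [hcast]
              nlinarith [hpn, hpj, hx0, hp0]
      have ht : (t:ℝ) ≤ c / 100 := Nat.floor_le (by positivity)
      have h64 : (64:ℝ) ^ (2*t) ≤ Real.exp ((1/10) * c) := by
        calc (64:ℝ) ^ (2*t) = (Real.exp (Real.log 64)) ^ (2*t) := by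
              rw [Real.exp_log (by norm_num : (0:ℝ) < 64)]
          _ = Real.exp (((2*t : ℕ):ℝ) * Real.log 64) := by rw [Real.exp_nat_mul]
          _ ≤ Real.exp ((1/10) * c) := by
              apply Real.exp_le_exp.2
              have hlog64 : Real.log 64 ≤ 4.2 := by
                have h2 : Real.log 2 < 0.6931471808 := Real.log_two_lt_d9
                have h64e : (64:ℝ) = 2 ^ 6 := by norm_num
                rw [h64e, Real.log_pow]
                push_cast
                linarith
              have hl0 : (0:ℝ) ≤ Real.log 64 := Real.log_nonneg (by norm_num)
              have hmt : ((2*t : ℕ):ℝ) ≤ c / 50 := by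
                push_cast
                linarith
              calc ((2*t : ℕ):ℝ) * Real.log 64 ≤ (c/50) * 4.2 := by
                    apply mul_le_mul hmt hlog64 hl0 (by positivity)
                _ ≤ (1/10) * c := by linarith
      have hnexp : (n:ℝ) = Real.exp c := (Real.exp_log hn0).symm
      have hcexp : c = Real.exp L := (Real.exp_log hc0).symm
      have hpb : p ≤ 2 * Real.exp (L - c) := by
        have h1 : p ≤ (2*c) / (n:ℝ) := by
          rw [hp]
          gcongr
        have h2 : (2*c) / (n:ℝ) = 2 * Real.exp (L - c) := by
          rw [Real.exp_sub, ← hcexp, ← hnexp]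
          ring
        linarith
      have hβ2 := key 2 (by norm_num) (by omega)
      have hβ3 := key 3 (by norm_num) (by omega)
      have hb2nn : (0:ℝ) ≤ (1 - 63/64*p)^(2*(n-2)) := pow_nonneg hβ0 _
      have hb3nn : (0:ℝ) ≤ (1 - 63/64*p)^(2*(n-3)) := pow_nonneg hβ0 _
      have hLc : L ≤ c := by nlinarith
      have hterm2 : (n:ℝ)^2 * (p * 64^(2*t) * (1 - 63/64*p)^(2*(n-2)))
          ≤ 2 * Real.exp (2 - (7/10) * c) := by
        have hA : p * 64^(2*t) * (1 - 63/64*p)^(2*(n-2))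
            ≤ (2 * Real.exp (L - c)) * Real.exp ((1/10)*c) * Real.exp (2 - (19/10)*x) := by
          apply mul_le_mul (mul_le_mul hpb h64 (by positivity) (by positivity)) hβ2 hb2nn
            (by positivity)
        have hn2 : (n:ℝ)^2 = Real.exp (2*c) := by
          rw [hnexp, ← Real.exp_nat_mul]
          norm_num
        calc (n:ℝ)^2 * (p * 64^(2*t) * (1-63/64*p)^(2*(n-2)))
            ≤ (n:ℝ)^2 * ((2*Real.exp (L-c)) * Real.exp ((1/10)*c)
                * Real.exp (2-(19/10)*x)) := by
              apply mul_le_mul_of_nonneg_left hA (by positivity)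
          _ = 2 * Real.exp (2*c + (L - c) + (1/10)*c + (2 - (19/10)*x)) := by
              rw [hn2]
              rw [show Real.exp (2*c) * ((2*Real.exp (L-c)) * Real.exp ((1/10)*c)
                  * Real.exp (2-(19/10)*x))
                = 2 * (Real.exp (2*c) * Real.exp (L-c) * Real.exp ((1/10)*c)
                  * Real.exp (2-(19/10)*x)) from by ring]
              rw [← Real.exp_add, ← Real.exp_add, ← Real.exp_add]
          _ ≤ 2 * Real.exp (2 - (7/10)*c) := by
              have harg : 2*c + (L - c) + (1/10)*c + (2 - (19/10)*x) ≤ 2 - (7/10)*c := by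
                nlinarith [hxlow, hL0, hc0]
              have := Real.exp_le_exp.2 harg
              linarith
      have hterm3 : (n:ℝ)^3 * (p^2 * 64^(2*t) * (1 - 63/64*p)^(2*(n-3)))
          ≤ 4 * Real.exp (2 - (7/10) * c) := by
        have hp2 : p^2 ≤ (2 * Real.exp (L - c))^2 := pow_le_pow_left₀ hp0 hpb 2
        have hsq : (2 * Real.exp (L - c))^2 = 4 * Real.exp (2*(L-c)) := by
          rw [mul_pow, ← Real.exp_nat_mul]
          norm_num
        have hA : p^2 * 64^(2*t) * (1 - 63/64*p)^(2*(n-3))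
            ≤ (4 * Real.exp (2*(L - c))) * Real.exp ((1/10)*c) * Real.exp (2 - (19/10)*x) := by
          apply mul_le_mul (mul_le_mul (hsq ▸ hp2) h64 (by positivity) (by positivity)) hβ3
            hb3nn (by positivity)
        have hn3e : (n:ℝ)^3 = Real.exp (3*c) := by
          rw [hnexp, ← Real.exp_nat_mul]
          norm_num
        calc (n:ℝ)^3 * (p^2 * 64^(2*t) * (1-63/64*p)^(2*(n-3)))
            ≤ (n:ℝ)^3 * ((4*Real.exp (2*(L-c))) * Real.exp ((1/10)*c)
                * Real.exp (2-(19/10)*x)) := by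
              apply mul_le_mul_of_nonneg_left hA (by positivity)
          _ = 4 * Real.exp (3*c + 2*(L - c) + (1/10)*c + (2 - (19/10)*x)) := by
              rw [hn3e]
              rw [show Real.exp (3*c) * ((4*Real.exp (2*(L-c))) * Real.exp ((1/10)*c)
                  * Real.exp (2-(19/10)*x))
                = 4 * (Real.exp (3*c) * Real.exp (2*(L-c)) * Real.exp ((1/10)*c)
                  * Real.exp (2-(19/10)*x)) from by ring]
              rw [← Real.exp_add, ← Real.exp_add, ← Real.exp_add]
          _ ≤ 4 * Real.exp (2 - (7/10)*c) := by
              have harg : 3*c + 2*(L - c) + (1/10)*c + (2 - (19/10)*x) ≤ 2 - (7/10)*c := by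
                nlinarith [hxlow, hL0, hc0, hLc]
              have := Real.exp_le_exp.2 harg
              linarith
      linarith [hterm2, hterm3]
    -- squeeze
    have hexp0 : Tendsto (fun n : ℕ => Real.exp (2 - (7/10)*Real.log n)) atTop (nhds 0) := by
      apply Real.tendsto_exp_atBot.comp
      have h1 : Tendsto (fun n : ℕ => (7/10) * Real.log n) atTop atTop :=
        hlog.const_mul_atTop (by norm_num)
      have h2 : Tendsto (fun n : ℕ => -((7/10) * Real.log n)) atTop atBot :=
        tendsto_neg_atTop_atBot.comp h1
      have h3 := tendsto_atBot_add_const_left atTop (2:ℝ) h2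
      simpa [sub_eq_add_neg] using h3
    have hlim : Tendsto (fun n : ℕ => 1 - 6 * Real.exp (2 - (7/10)*Real.log n)) atTop
        (nhds (1 - 6*0)) := tendsto_const_nhds.sub (hexp0.const_mul 6)
    rw [show (1:ℝ) - 6*0 = 1 from by norm_num] at hlim
    exact tendsto_of_tendsto_of_tendsto_of_le_of_le' hlim tendsto_const_nhds
      (hbound.mono fun n h => h.1) (hbound.mono fun n h => h.2)
  exact hmain
end
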